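/- arXiv:1706.03267 — 8 statements merged into one kernel-verified Lean document; each statement's English description precedes it below -/
import Mathlib

section
/- Suppose (μ*, Σ*) is the unique maximizer of the Gaussian log-likelihood L(μ, Σ) over ℝ^d × {symmetric positive definite d×d matrices}, and S* is a maximizer of the reformulated log-likelihood L̂(S) over the symmetric positive definite (d+1)×(d+1) matrices. Then L̂(S*) = L(μ*, Σ*) and S* is the block matrix [[Σ* + μ*μ*ᵀ, μ*], [μ*ᵀ, 1]]. -/
open Matrix Real

noncomputable def pN {d : ℕ} (x μ : Fin d → ℝ) (C : Matrix (Fin d) (Fin d) ℝ) : ℝ :=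
  C.det ^ (-(1:ℝ)/2) * (2 * Real.pi) ^ (-(d:ℝ)/2) *
    Real.exp (-(1/2) * ((x - μ) ⬝ᵥ (C⁻¹ *ᵥ (x - μ))))

noncomputable def qN {d : ℕ} (y : Fin (d+1) → ℝ) (S : Matrix (Fin (d+1)) (Fin (d+1)) ℝ) : ℝ :=
  (2 * Real.pi * Real.exp 1) ^ ((1:ℝ)/2) * S.det ^ (-(1:ℝ)/2) *
    (2 * Real.pi) ^ (-((d:ℝ)+1)/2) * Real.exp (-(1/2) * (y ⬝ᵥ (S⁻¹ *ᵥ y)))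

def liftPt {d : ℕ} (x : Fin d → ℝ) : Fin (d+1) → ℝ := Fin.snoc x 1

noncomputable def Lgauss {d n : ℕ} (x : Fin n → Fin d → ℝ) (μ : Fin d → ℝ)
    (C : Matrix (Fin d) (Fin d) ℝ) : ℝ := ∑ i, Real.log (pN (x i) μ C)

noncomputable def Lhat {d n : ℕ} (x : Fin n → Fin d → ℝ)
    (S : Matrix (Fin (d+1)) (Fin (d+1)) ℝ) : ℝ := ∑ i, Real.log (qN (liftPt (x i)) S)

def Sblk {d : ℕ} (U : Matrix (Fin d) (Fin d) ℝ) (t : Fin d → ℝ) (s : ℝ) :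
    Matrix (Fin (d+1)) (Fin (d+1)) ℝ :=
  Matrix.of (Fin.snoc
    (fun i : Fin d => Fin.snoc (fun j : Fin d => U i j + s * t i * t j) (s * t i))
    (Fin.snoc (fun j : Fin d => s * t j) s))


section Brd
variable {d : ℕ}

variable {d : ℕ}

def brd (M : Matrix (Fin d) (Fin d) ℝ) (b c : Fin d → ℝ) (r : ℝ) :
    Matrix (Fin (d+1)) (Fin (d+1)) ℝ :=
  Matrix.of (Fin.snoc (fun i : Fin d => Fin.snoc (M i) (b i)) (Fin.snoc c r))

variable {M M' : Matrix (Fin d) (Fin d) ℝ} {b c b' c' : Fin d → ℝ} {r r' : ℝ}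
variable {U : Matrix (Fin d) (Fin d) ℝ} {t : Fin d → ℝ} {s : ℝ}

@[simp] lemma brd_cc (i j : Fin d) : brd M b c r i.castSucc j.castSucc = M i j := by
  simp [brd]
@[simp] lemma brd_cl (i : Fin d) : brd M b c r i.castSucc (Fin.last d) = b i := by
  simp [brd]
@[simp] lemma brd_lc (j : Fin d) : brd M b c r (Fin.last d) j.castSucc = c j := by
  simp [brd]
@[simp] lemma brd_ll : brd M b c r (Fin.last d) (Fin.last d) = r := by
  simp [brd]

lemma brd_mul_brd :
    brd M b c r * brd M' b' c' r' =
      brd (M * M' + Matrix.of fun i j => b i * c' j)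
        (M *ᵥ b' + r' • b) (c ᵥ* M' + r • c') (c ⬝ᵥ b' + r * r') := by
  ext i j
  rw [Matrix.mul_apply, Fin.sum_univ_castSucc]
  refine Fin.lastCases ?_ (fun i => ?_) i <;> refine Fin.lastCases ?_ (fun j => ?_) j <;>
    simp [Matrix.mul_apply, Matrix.mulVec, Matrix.vecMul, dotProduct, mul_comm]

lemma brd_one : brd (1 : Matrix (Fin d) (Fin d) ℝ) 0 0 1 = 1 := by
  ext i j
  refine Fin.lastCases ?_ (fun i => ?_) i <;> refine Fin.lastCases ?_ (fun j => ?_) j <;>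
    simp [Matrix.one_apply, Fin.castSucc_lt_last, (Fin.castSucc_lt_last _).ne,
      (Fin.castSucc_lt_last _).ne', Fin.castSucc_inj]

lemma brd_transpose : (brd M b c r)ᵀ = brd Mᵀ c b r := by
  ext i j
  refine Fin.lastCases ?_ (fun i => ?_) i <;> refine Fin.lastCases ?_ (fun j => ?_) j <;> simp

lemma brd_mulVec (v : Fin d → ℝ) (e : ℝ) :
    brd M b c r *ᵥ Fin.snoc v e = Fin.snoc (M *ᵥ v + e • b) (c ⬝ᵥ v + r * e) := by
  ext i
  refine Fin.lastCases ?_ (fun i => ?_) i <;>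
    · rw [Matrix.mulVec, dotProduct, Fin.sum_univ_castSucc]
      simp [Matrix.mulVec, dotProduct, mul_comm]

lemma dot_snoc (a c : Fin d → ℝ) (e f : ℝ) :
    (Fin.snoc a e : Fin (d+1) → ℝ) ⬝ᵥ Fin.snoc c f = a ⬝ᵥ c + e * f := by
  rw [dotProduct, Fin.sum_univ_castSucc]; simp [dotProduct]

lemma brd_quad (v : Fin d → ℝ) (e : ℝ) :
    (Fin.snoc v e : Fin (d+1) → ℝ) ⬝ᵥ (brd M b c r *ᵥ Fin.snoc v e) =
      v ⬝ᵥ (M *ᵥ v) + e * (v ⬝ᵥ b) + e * (c ⬝ᵥ v) + r * e ^ 2 := by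
  rw [brd_mulVec, dot_snoc, dotProduct_add, dotProduct_smul]
  ring_nf

lemma det_brd_row (M : Matrix (Fin d) (Fin d) ℝ) (b : Fin d → ℝ) (r : ℝ) :
    (brd M b 0 r).det = r * M.det := by
  rw [Matrix.det_succ_row _ (Fin.last d), Fin.sum_univ_castSucc]
  have h1 : ∀ j : Fin d, brd M b 0 r (Fin.last d) j.castSucc = 0 := fun j => by simp
  have h2 : (brd M b 0 r).submatrix (Fin.last d).succAbove (Fin.last d).succAbove = M := by
    ext i j
    simp [Fin.succAbove_last]
  rw [Fin.succAbove_last] at h2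
  simp [h1, Fin.succAbove_last, h2]

lemma outer_mulVec (a e v : Fin d → ℝ) :
    (Matrix.of fun i j => a i * e j) *ᵥ v = (e ⬝ᵥ v) • a := by
  ext i
  simp only [Matrix.mulVec, dotProduct, Matrix.of_apply, Pi.smul_apply, smul_eq_mul,
    Finset.sum_mul]
  exact Finset.sum_congr rfl fun j _ => by ring

lemma outer_mul (a e : Fin d → ℝ) (W : Matrix (Fin d) (Fin d) ℝ) :
    (Matrix.of fun i j => a i * e j) * W = Matrix.of fun i j => a i * ((e ᵥ* W) j) := by
  ext i j
  simp only [Matrix.mul_apply, Matrix.of_apply, Matrix.vecMul, dotProduct, Finset.mul_sum]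
  exact Finset.sum_congr rfl fun k _ => by ring

lemma sblk_eq_brd : Sblk U t s =
    brd (U + Matrix.of fun i j => s * t i * t j) (s • t) (s • t) s := by
  ext i j
  refine Fin.lastCases ?_ (fun i => ?_) i <;> refine Fin.lastCases ?_ (fun j => ?_) j <;>
    simp [Sblk, brd]

lemma sblk_quad (v : Fin d → ℝ) (e : ℝ) :
    (Fin.snoc v e : Fin (d+1) → ℝ) ⬝ᵥ (Sblk U t s *ᵥ Fin.snoc v e) =
      v ⬝ᵥ (U *ᵥ v) + s * (t ⬝ᵥ v + e) ^ 2 := by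
  rw [sblk_eq_brd, brd_quad]
  have h : (Matrix.of fun i j => s * t i * t j) = Matrix.of fun i j => (s * t i) * t j := by
    ext i j; ring
  rw [h, add_mulVec, dotProduct_add, outer_mulVec]
  simp only [dotProduct_smul, smul_dotProduct, dotProduct_comm v t, smul_eq_mul]
  have h3 : (v ⬝ᵥ fun i => s * t i) = s * (t ⬝ᵥ v) := by
    simp only [dotProduct, Finset.mul_sum]
    exact Finset.sum_congr rfl fun i _ => by ring
  rw [h3]
  ring

lemma sblk_det : (Sblk U t s).det = s * U.det := by
  have hprod : Sblk U t s = brd U (s • t) 0 s * (brd 1 t 0 1)ᵀ := by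
    rw [brd_transpose, brd_mul_brd]
    ext i j
    refine Fin.lastCases ?_ (fun i => ?_) i <;> refine Fin.lastCases ?_ (fun j => ?_) j <;>
      simp [Sblk, brd, Matrix.vecMul, Matrix.mulVec, dotProduct, mul_comm]
  rw [hprod, Matrix.det_mul, Matrix.det_transpose, det_brd_row, det_brd_row]
  simp


lemma snoc_ne_zero_of_ne {v : Fin d → ℝ} (hv : v ≠ 0) (e : ℝ) :
    (Fin.snoc v e : Fin (d+1) → ℝ) ≠ 0 := by
  intro h
  apply hv
  funext i
  have := congrFun h i.castSucc
  simpa using this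

lemma sblk_posDef (hU : U.PosDef) (hs : 0 < s) : (Sblk U t s).PosDef := by
  have hU' : ∀ a b, U b a = U a b := fun a b => by
    have := congrFun (congrFun hU.1 a) b; simpa using this
  refine posDef_iff_dotProduct_mulVec.mpr ⟨?_, ?_⟩
  · show (Sblk U t s)ᴴ = Sblk U t s
    ext i j
    rw [Matrix.conjTranspose_apply]
    refine Fin.lastCases ?_ (fun i => ?_) i <;> refine Fin.lastCases ?_ (fun j => ?_) j <;>
      simp [Sblk] <;> try (rw [hU']; ring)
  · intro y hy
    rw [star_trivial]
    have hy' : y = Fin.snoc (Fin.init y) (y (Fin.last d)) := (Fin.snoc_init_self y).symm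
    rw [hy', sblk_quad]
    by_cases hv : Fin.init y = 0
    · have he : y (Fin.last d) ≠ 0 := by
        intro h0
        apply hy
        funext i
        refine Fin.lastCases ?_ (fun i => ?_) i
        · exact h0
        · have := congrFun hv i; simpa [Fin.init] using this
      rw [hv]
      simpa using mul_pos hs (pow_two_pos_of_ne_zero he)
    · have h1 : 0 < Fin.init y ⬝ᵥ (U *ᵥ Fin.init y) := by
        have := hU.dotProduct_mulVec_pos hv
        rwa [star_trivial] at this
      have h2 : 0 ≤ s * (t ⬝ᵥ Fin.init y + y (Fin.last d)) ^ 2 :=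
        mul_nonneg hs.le (sq_nonneg _)
      linarith

lemma sblk_inv (hU : U.PosDef) (hs : s ≠ 0) :
    (Sblk U t s)⁻¹ = brd U⁻¹ (-(U⁻¹ *ᵥ t)) (-(U⁻¹ *ᵥ t)) (s⁻¹ + t ⬝ᵥ (U⁻¹ *ᵥ t)) := by
  have hU1 : U * U⁻¹ = 1 := Matrix.mul_nonsing_inv U hU.det_pos.ne'.isUnit
  have hUsym : ∀ a b, U⁻¹ b a = U⁻¹ a b := fun a b => by
    have := congrFun (congrFun hU.inv.1 a) b; simpa using this
  have hvm : t ᵥ* U⁻¹ = U⁻¹ *ᵥ t := by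
    ext j
    simp only [Matrix.vecMul, Matrix.mulVec, dotProduct]
    exact Finset.sum_congr rfl fun k _ => by rw [hUsym j k]; ring
  have h4 : (Matrix.of fun i j => s * t i * t j) =
      Matrix.of fun i j => (s • t) i * t j := by
    ext i j; simp
  apply Matrix.inv_eq_right_inv
  rw [sblk_eq_brd, brd_mul_brd]
  have hM : (U + Matrix.of fun i j => s * t i * t j) * U⁻¹ +
      (Matrix.of fun i j => (s • t) i * (-(U⁻¹ *ᵥ t)) j) = 1 := by
    rw [add_mul, hU1, h4, outer_mul, hvm]
    ext i j
    simp [Matrix.one_apply]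
    try ring
  have hb : (U + Matrix.of fun i j => s * t i * t j) *ᵥ (-(U⁻¹ *ᵥ t)) +
      (s⁻¹ + t ⬝ᵥ (U⁻¹ *ᵥ t)) • (s • t) = 0 := by
    rw [add_mulVec, h4, outer_mulVec, Matrix.mulVec_neg, Matrix.mulVec_mulVec, hU1,
      Matrix.one_mulVec]
    ext i
    simp only [Pi.add_apply, Pi.neg_apply, Pi.smul_apply, smul_eq_mul, Pi.zero_apply,
      dotProduct_neg]
    linear_combination t i * inv_mul_cancel₀ hs
  have hc : (s • t) ᵥ* U⁻¹ + s • (-(U⁻¹ *ᵥ t)) = 0 := by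
    rw [Matrix.smul_vecMul, hvm]
    ext i; simp
  have hr : (s • t) ⬝ᵥ (-(U⁻¹ *ᵥ t)) + s * (s⁻¹ + t ⬝ᵥ (U⁻¹ *ᵥ t)) = 1 := by
    rw [smul_dotProduct, dotProduct_neg, smul_eq_mul]
    linear_combination mul_inv_cancel₀ hs
  rw [hM, hb, hc, hr, brd_one]

lemma posdef_decomp {S : Matrix (Fin (d+1)) (Fin (d+1)) ℝ} (hS : S.PosDef) :
    ∃ (U : Matrix (Fin d) (Fin d) ℝ) (t : Fin d → ℝ) (s : ℝ),
      U.PosDef ∧ 0 < s ∧ S = Sblk U t s := by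
  have hsym : ∀ a b, S b a = S a b := fun a b => by
    have := congrFun (congrFun hS.1 a) b; simpa using this
  set s := S (Fin.last d) (Fin.last d) with hs_def
  have hs : 0 < s := by
    have hne : (Pi.single (Fin.last d) 1 : Fin (d+1) → ℝ) ≠ 0 := by
      intro h
      have := congrFun h (Fin.last d)
      simp at this
    have h := hS.dotProduct_mulVec_pos hne
    rw [star_trivial] at h
    simpa [Matrix.mulVec_single, dotProduct, Pi.single_apply] using h
  set t : Fin d → ℝ := fun i => S i.castSucc (Fin.last d) / s with ht_def
  set U : Matrix (Fin d) (Fin d) ℝ :=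
    Matrix.of fun i j => S i.castSucc j.castSucc - s * t i * t j with hU_def
  have hrepr : S = Sblk U t s := by
    ext i j
    refine Fin.lastCases ?_ (fun i => ?_) i <;> refine Fin.lastCases ?_ (fun j => ?_) j <;>
      simp [Sblk, hU_def, ht_def]
    · rfl
    · rw [mul_div_cancel₀ _ hs.ne']
      exact hsym _ _
    · rw [mul_div_cancel₀ _ hs.ne']
  have hUpos : U.PosDef := by
    refine posDef_iff_dotProduct_mulVec.mpr ⟨?_, ?_⟩
    · show Uᴴ = U
      ext i j
      rw [Matrix.conjTranspose_apply]
      simp only [hU_def, Matrix.of_apply, star_trivial]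
      rw [hsym i.castSucc j.castSucc]
      ring
    · intro v hv
      rw [star_trivial]
      have hy := hS.dotProduct_mulVec_pos (snoc_ne_zero_of_ne hv (-(t ⬝ᵥ v)))
      rw [star_trivial, hrepr, sblk_quad] at hy
      simpa using hy
  exact ⟨U, t, s, hUpos, hs, hrepr⟩


lemma pN_pos (hU : U.PosDef) (x : Fin d → ℝ) : 0 < pN x t U := by
  unfold pN
  have h1 : (0:ℝ) < U.det ^ (-(1:ℝ)/2) := Real.rpow_pos_of_pos hU.det_pos _
  have h2 : (0:ℝ) < (2 * Real.pi) ^ (-(d:ℝ)/2) := Real.rpow_pos_of_pos Real.two_pi_pos _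
  positivity

lemma quad_inv_sblk (hU : U.PosDef) (hs : 0 < s) (x : Fin d → ℝ) :
    liftPt x ⬝ᵥ ((Sblk U t s)⁻¹ *ᵥ liftPt x) =
      (x - t) ⬝ᵥ (U⁻¹ *ᵥ (x - t)) + s⁻¹ := by
  have hUsym : ∀ a b, U⁻¹ b a = U⁻¹ a b := fun a b => by
    have := congrFun (congrFun hU.inv.1 a) b; simpa using this
  have hvm : t ᵥ* U⁻¹ = U⁻¹ *ᵥ t := by
    ext j
    simp only [Matrix.vecMul, Matrix.mulVec, dotProduct]
    exact Finset.sum_congr rfl fun k _ => by rw [hUsym j k]; ring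
  have hswap : t ⬝ᵥ (U⁻¹ *ᵥ x) = x ⬝ᵥ (U⁻¹ *ᵥ t) := by
    rw [Matrix.dotProduct_mulVec, hvm, dotProduct_comm]
  rw [show liftPt x = Fin.snoc x 1 from rfl, sblk_inv hU hs.ne', brd_quad,
    sub_dotProduct, Matrix.mulVec_sub, dotProduct_sub, dotProduct_sub]
  simp only [dotProduct_neg, neg_dotProduct]
  rw [dotProduct_comm (U⁻¹ *ᵥ t) x, hswap]
  ring

lemma qN_sblk (hU : U.PosDef) (hs : 0 < s) (x : Fin d → ℝ) :
    qN (liftPt x) (Sblk U t s) =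
      pN x t U * Real.exp ((1 - Real.log s - s⁻¹) / 2) := by
  have hπ : (0:ℝ) < 2 * Real.pi := Real.two_pi_pos
  have hdet : (0:ℝ) < U.det := hU.det_pos
  unfold qN pN
  rw [sblk_det, quad_inv_sblk hU hs x,
    Real.rpow_def_of_pos (by positivity : (0:ℝ) < 2 * Real.pi * Real.exp 1),
    Real.rpow_def_of_pos (by positivity : (0:ℝ) < s * U.det),
    Real.rpow_def_of_pos hπ, Real.rpow_def_of_pos hπ, Real.rpow_def_of_pos hdet]
  rw [← Real.exp_add, ← Real.exp_add, ← Real.exp_add, ← Real.exp_add, ← Real.exp_add,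
    ← Real.exp_add]
  congr 1
  rw [Real.log_mul hπ.ne' (Real.exp_ne_zero 1), Real.log_exp,
    Real.log_mul hs.ne' hdet.ne']
  ring

lemma log_qN_sblk (hU : U.PosDef) (hs : 0 < s) (x : Fin d → ℝ) :
    Real.log (qN (liftPt x) (Sblk U t s)) =
      Real.log (pN x t U) + (1 - Real.log s - s⁻¹) / 2 := by
  rw [qN_sblk hU hs x, Real.log_mul (pN_pos hU x).ne' (Real.exp_ne_zero _), Real.log_exp]

lemma Lhat_sblk {n : ℕ} (x : Fin n → Fin d → ℝ) (hU : U.PosDef) (hs : 0 < s) :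
    Lhat x (Sblk U t s) = Lgauss x t U + n * ((1 - Real.log s - s⁻¹) / 2) := by
  unfold Lhat Lgauss
  rw [Finset.sum_congr rfl fun i _ => log_qN_sblk hU hs (x i), Finset.sum_add_distrib,
    Finset.sum_const, Finset.card_univ, Fintype.card_fin, nsmul_eq_mul]

lemma g_nonpos (hs : 0 < s) : (1 - Real.log s - s⁻¹) / 2 ≤ 0 := by
  have h := Real.log_le_sub_one_of_pos (inv_pos.mpr hs)
  rw [Real.log_inv] at h
  linarith

lemma g_eq_zero (hs : 0 < s) (h : (1 - Real.log s - s⁻¹) / 2 = 0) : s = 1 := by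
  by_contra hne
  have h2 := Real.log_lt_sub_one_of_pos (inv_pos.mpr hs) (by
    rw [ne_eq, inv_eq_one]; exact hne)
  rw [Real.log_inv] at h2
  linarith

end Brd

/-- the unique maximizer of the Gaussian log-likelihood and a maximizer of
the reformulated log-likelihood are related by the block formula, and the optimal values agree. -/
theorem reformulation_single_gaussian {d n : ℕ} (hd : 1 ≤ d) (x : Fin n → Fin d → ℝ)
    (μs : Fin d → ℝ) (Cs : Matrix (Fin d) (Fin d) ℝ) (hCs : Cs.PosDef)
    (hmax : ∀ (μ : Fin d → ℝ) (C : Matrix (Fin d) (Fin d) ℝ), C.PosDef →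
      Lgauss x μ C ≤ Lgauss x μs Cs)
    (huniq : ∀ (μ : Fin d → ℝ) (C : Matrix (Fin d) (Fin d) ℝ), C.PosDef →
      Lgauss x μ C = Lgauss x μs Cs → μ = μs ∧ C = Cs)
    (Ss : Matrix (Fin (d+1)) (Fin (d+1)) ℝ) (hSs : Ss.PosDef)
    (hSmax : ∀ S : Matrix (Fin (d+1)) (Fin (d+1)) ℝ, S.PosDef → Lhat x S ≤ Lhat x Ss) :
    Lhat x Ss = Lgauss x μs Cs ∧ Ss = Sblk Cs μs 1 := by
  rcases Nat.eq_zero_or_pos n with hn | hn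
  · exfalso
    subst hn
    have hzero : ∀ (μ : Fin d → ℝ) (C : Matrix (Fin d) (Fin d) ℝ), Lgauss x μ C = 0 := by
      intro μ C
      simp [Lgauss]
    have h1 := huniq μs (Cs + 1) (hCs.add Matrix.PosDef.one) (by rw [hzero, hzero])
    have h2 : (1 : Matrix (Fin d) (Fin d) ℝ) = 0 := by
      have := h1.2
      have h3 : Cs + 1 = Cs + 0 := by rw [add_zero]; exact this
      exact add_left_cancel h3
    have h4 := congrFun (congrFun h2 ⟨0, hd⟩) ⟨0, hd⟩
    rw [Matrix.one_apply_eq] at h4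
    exact one_ne_zero h4
  · obtain ⟨U₀, t₀, s₀, hU₀, hs₀, hrepr⟩ := posdef_decomp hSs
    have hA : Lhat x Ss = Lgauss x t₀ U₀ + n * ((1 - Real.log s₀ - s₀⁻¹) / 2) := by
      rw [hrepr]; exact Lhat_sblk x hU₀ hs₀
    have hB : Lhat x (Sblk Cs μs 1) = Lgauss x μs Cs := by
      rw [Lhat_sblk x hCs one_pos]
      simp
    have hposblk : (Sblk Cs μs 1).PosDef := sblk_posDef hCs one_pos
    have hge : Lgauss x μs Cs ≤ Lhat x Ss := hB ▸ hSmax _ hposblk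
    have hle1 : Lgauss x t₀ U₀ ≤ Lgauss x μs Cs := hmax _ _ hU₀
    have hgs : (1 - Real.log s₀ - s₀⁻¹) / 2 ≤ 0 := g_nonpos hs₀
    have hng : (n:ℝ) * ((1 - Real.log s₀ - s₀⁻¹) / 2) ≤ 0 :=
      mul_nonpos_of_nonneg_of_nonpos (Nat.cast_nonneg n) hgs
    have h5 : Lgauss x t₀ U₀ = Lgauss x μs Cs := le_antisymm hle1 (by linarith [hA ▸ hge])
    have h6 : (n:ℝ) * ((1 - Real.log s₀ - s₀⁻¹) / 2) = 0 := by
      have := hA ▸ hge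
      linarith
    have h7 : (1 - Real.log s₀ - s₀⁻¹) / 2 = 0 := by
      rcases mul_eq_zero.mp h6 with h | h
      · exact absurd h (by positivity)
      · exact h
    have hs1 : s₀ = 1 := g_eq_zero hs₀ h7
    obtain ⟨ht, hUeq⟩ := huniq t₀ U₀ hU₀ h5
    constructor
    · rw [hA, h5, h7]; ring
    · rw [hrepr, ht, hUeq, hs1]
end

section
/- Let ψ be a real-valued function on the symmetric positive definite (d+1)×(d+1) matrices that splits over the block parametrization as ψ(S(U,t,s)) = ψ₁(U,t) + ψ₂(s), where ψ₂ : (0,∞) → ℝ attains its maximum uniquely at s = 1. Suppose S* maximizes ψ(S) + L̂(S) over the symmetric positive definite (d+1)×(d+1) matrices, and (μ*, Σ*) is the unique maximizer of ψ₁(Σ, μ) + L(μ, Σ) over ℝ^d × {symmetric positive definite d×d matrices}. Then S* = [[Σ* + μ*μ*ᵀ, μ*], [μ*ᵀ, 1]]. -/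
open Matrix Real

namespace PenAux

variable {d : ℕ}

/-- The column matrix of a vector. -/
def colt (t : Fin d → ℝ) : Matrix (Fin d) (Fin 1) ℝ := Matrix.of fun i _ => t i

/-- The block matrix `Sblk` transported to the sum type. -/
def Tblk (U : Matrix (Fin d) (Fin d) ℝ) (t : Fin d → ℝ) (s : ℝ) :
    Matrix (Fin d ⊕ Fin 1) (Fin d ⊕ Fin 1) ℝ :=
  fromBlocks (U + s • (colt t * (colt t)ᵀ)) (s • colt t) (s • (colt t)ᵀ)
    (s • (1 : Matrix (Fin 1) (Fin 1) ℝ))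

def Lmat (t : Fin d → ℝ) : Matrix (Fin d ⊕ Fin 1) (Fin d ⊕ Fin 1) ℝ :=
  fromBlocks 1 (colt t) 0 1

def Dmat (U : Matrix (Fin d) (Fin d) ℝ) (s : ℝ) : Matrix (Fin d ⊕ Fin 1) (Fin d ⊕ Fin 1) ℝ :=
  fromBlocks U 0 0 (s • (1 : Matrix (Fin 1) (Fin 1) ℝ))

lemma finE_symm_castSucc (i : Fin d) :
    finSumFinEquiv.symm (Fin.castSucc i) = Sum.inl i := finSumFinEquiv_symm_apply_castAdd i

lemma Sblk_eq_reindex (U : Matrix (Fin d) (Fin d) ℝ) (t : Fin d → ℝ) (s : ℝ) :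
    Sblk U t s = reindex finSumFinEquiv finSumFinEquiv (Tblk U t s) := by
  ext i j
  induction i using Fin.lastCases with
  | last =>
    induction j using Fin.lastCases with
    | last => simp [Sblk, Tblk, finSumFinEquiv_symm_last, colt]
    | cast j => simp [Sblk, Tblk, finSumFinEquiv_symm_last, finE_symm_castSucc, colt]
  | cast i =>
    induction j using Fin.lastCases with
    | last => simp [Sblk, Tblk, finSumFinEquiv_symm_last, finE_symm_castSucc, colt]
    | cast j =>
      simp [Sblk, Tblk, finE_symm_castSucc, colt, Matrix.mul_apply, mul_assoc]

lemma Tblk_factor (U : Matrix (Fin d) (Fin d) ℝ) (t : Fin d → ℝ) (s : ℝ) :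
    Tblk U t s = Lmat t * Dmat U s * (Lmat t)ᵀ := by
  simp [Tblk, Lmat, Dmat, fromBlocks_transpose, fromBlocks_multiply, Matrix.mul_smul,
    Matrix.smul_mul, Matrix.mul_assoc]

lemma det_Tblk (U : Matrix (Fin d) (Fin d) ℝ) (t : Fin d → ℝ) (s : ℝ) :
    (Tblk U t s).det = s * U.det := by
  rw [Tblk_factor]
  rw [det_mul, det_mul, Lmat, det_fromBlocks_zero₂₁, fromBlocks_transpose, Dmat,
    det_fromBlocks_zero₂₁]
  simp [det_fromBlocks_zero₁₂, det_smul, mul_comm]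

noncomputable def Binv (U : Matrix (Fin d) (Fin d) ℝ) (t : Fin d → ℝ) (s : ℝ) :
    Matrix (Fin d ⊕ Fin 1) (Fin d ⊕ Fin 1) ℝ :=
  fromBlocks U⁻¹ (-(U⁻¹ * colt t)) (-((colt t)ᵀ * U⁻¹))
    (s⁻¹ • (1 : Matrix (Fin 1) (Fin 1) ℝ) + (colt t)ᵀ * U⁻¹ * colt t)

set_option linter.unnecessarySeqFocus false in
lemma Tblk_mul_Binv (U : Matrix (Fin d) (Fin d) ℝ) (t : Fin d → ℝ) {s : ℝ}
    (hU : U.PosDef) (hs : s ≠ 0) : Tblk U t s * Binv U t s = 1 := by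
  have hUU : U * U⁻¹ = 1 := mul_nonsing_inv U (isUnit_iff_ne_zero.2 hU.det_pos.ne')
  have key : ∀ B : Matrix (Fin d) (Fin 1) ℝ, U * (U⁻¹ * B) = B := fun B => by
    rw [← Matrix.mul_assoc, hUU, Matrix.one_mul]
  rw [Tblk, Binv, fromBlocks_multiply, ← fromBlocks_one]
  simp only [Matrix.mul_add, Matrix.add_mul, Matrix.mul_neg, Matrix.neg_mul,
    Matrix.smul_mul, Matrix.mul_smul, Matrix.mul_assoc, Matrix.mul_one, Matrix.one_mul,
    key, hUU, smul_smul, mul_inv_cancel₀ hs, inv_mul_cancel₀ hs, one_smul, smul_neg]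
  ext i j
  rcases i with i|i <;> rcases j with j|j <;>
    simp [Matrix.add_apply, Matrix.neg_apply, Matrix.smul_apply, Matrix.one_apply] <;> ring

lemma Tblk_inv (U : Matrix (Fin d) (Fin d) ℝ) (t : Fin d → ℝ) {s : ℝ}
    (hU : U.PosDef) (hs : s ≠ 0) : (Tblk U t s)⁻¹ = Binv U t s :=
  inv_eq_right_inv (Tblk_mul_Binv U t hU hs)

lemma posDef_mul_mul_transpose {m : Type*} [Fintype m] [DecidableEq m]
    {M L : Matrix m m ℝ} (hM : M.PosDef) (hL : IsUnit L.det) : (L * M * Lᵀ).PosDef := by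
  refine PosDef.of_dotProduct_mulVec_pos ?_ ?_
  · have := isHermitian_mul_mul_conjTranspose L hM.1
    simpa [conjTranspose_eq_transpose_of_trivial] using this
  · intro y hy
    have hinj : Function.Injective (Lᵀ.mulVec) :=
      mulVec_injective_iff_isUnit.2 ((Matrix.isUnit_iff_isUnit_det _).2
        (by simpa [det_transpose] using hL))
    have hz : Lᵀ *ᵥ y ≠ 0 := fun h => hy (hinj (by simpa using h))
    have hq := hM.dotProduct_mulVec_pos hz
    have heq : y ⬝ᵥ ((L * M * Lᵀ) *ᵥ y) = (Lᵀ *ᵥ y) ⬝ᵥ (M *ᵥ (Lᵀ *ᵥ y)) := by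
      rw [← mulVec_mulVec, ← mulVec_mulVec, dotProduct_mulVec, ← mulVec_transpose]
    simpa [star_trivial, heq] using hq

lemma posDef_of_mul_mul_transpose {m : Type*} [Fintype m] [DecidableEq m]
    {M L : Matrix m m ℝ} (hT : (L * M * Lᵀ).PosDef) (hL : IsUnit L.det) : M.PosDef := by
  have hL' : IsUnit L := (Matrix.isUnit_iff_isUnit_det _).2 hL
  have : M = L⁻¹ * (L * M * Lᵀ) * (L⁻¹)ᵀ := by
    rw [transpose_nonsing_inv, Matrix.mul_assoc (L⁻¹) _ _, Matrix.mul_assoc (L * M) _ _,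
      mul_nonsing_inv _ (by simpa [det_transpose] using hL), Matrix.mul_one,
      ← Matrix.mul_assoc, nonsing_inv_mul _ hL, Matrix.one_mul]
  rw [this]
  exact posDef_mul_mul_transpose hT (isUnit_nonsing_inv_det L hL)

lemma det_Lmat (t : Fin d → ℝ) : (Lmat t).det = 1 := by
  rw [Lmat, det_fromBlocks_zero₂₁]; simp

lemma posDef_submatrix_equiv {m n : Type*} [Fintype m] [DecidableEq m] [Fintype n]
    [DecidableEq n] {M : Matrix n n ℝ} (hM : M.PosDef) (e : m ≃ n) :
    (M.submatrix e e).PosDef := by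
  refine PosDef.of_dotProduct_mulVec_pos ?_ ?_
  · rw [Matrix.IsHermitian, conjTranspose_submatrix, hM.1]
  · intro y hy
    have hy' : (y ∘ e.symm) ≠ 0 := fun h => hy (by
      funext i; have := congrFun h (e i); simpa using this)
    have hq := hM.dotProduct_mulVec_pos hy'
    have heq : y ⬝ᵥ (M.submatrix e e *ᵥ y) = (y ∘ e.symm) ⬝ᵥ (M *ᵥ (y ∘ e.symm)) := by
      rw [submatrix_mulVec_equiv, ← comp_equiv_symm_dotProduct]
    simpa [star_trivial, heq] using hq

lemma dotProduct_self_nonneg' {m : Type*} [Fintype m] (v : m → ℝ) : 0 ≤ v ⬝ᵥ v :=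
  Finset.sum_nonneg fun i _ => mul_self_nonneg _

lemma dotProduct_self_pos {m : Type*} [Fintype m] {v : m → ℝ} (hv : v ≠ 0) :
    0 < v ⬝ᵥ v := by
  rcases (dotProduct_self_nonneg' v).lt_or_eq with h | h
  · exact h
  · exact absurd ((dotProduct_self_eq_zero).1 h.symm) hv

lemma quad_Dmat (U : Matrix (Fin d) (Fin d) ℝ) (s : ℝ) (z : Fin d ⊕ Fin 1 → ℝ) :
    z ⬝ᵥ (Dmat U s *ᵥ z) =
      (z ∘ Sum.inl) ⬝ᵥ (U *ᵥ (z ∘ Sum.inl)) + s * ((z ∘ Sum.inr) ⬝ᵥ (z ∘ Sum.inr)) := by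
  conv_lhs => rw [← Sum.elim_comp_inl_inr z]
  rw [Dmat, fromBlocks_mulVec, sumElim_dotProduct_sumElim]
  simp [smul_mulVec, dotProduct_smul]

lemma posDef_Dmat (U : Matrix (Fin d) (Fin d) ℝ) {s : ℝ} (hU : U.PosDef) (hs : 0 < s) :
    (Dmat U s).PosDef := by
  refine PosDef.of_dotProduct_mulVec_pos ?_ ?_
  · rw [Matrix.IsHermitian, Dmat, fromBlocks_conjTranspose, hU.1]
    simp
  · intro z hz
    rw [star_trivial, quad_Dmat]
    by_cases h1 : (z ∘ Sum.inl) = 0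
    · have h2 : (z ∘ Sum.inr) ≠ 0 := by
        intro h2; apply hz; funext p; cases p with
        | inl i => exact congrFun h1 i
        | inr i => exact congrFun h2 i
      have := dotProduct_self_pos h2
      have hU0 : (0:ℝ) ≤ (z ∘ Sum.inl) ⬝ᵥ (U *ᵥ (z ∘ Sum.inl)) := by
        simpa [star_trivial] using hU.posSemidef.dotProduct_mulVec_nonneg (z ∘ Sum.inl)
      nlinarith
    · have := hU.dotProduct_mulVec_pos h1
      rw [star_trivial] at this
      have h3 : (0:ℝ) ≤ (z ∘ Sum.inr) ⬝ᵥ (z ∘ Sum.inr) := dotProduct_self_nonneg' _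
      nlinarith

lemma posDef_Dmat_inv (U : Matrix (Fin d) (Fin d) ℝ) {s : ℝ} (hD : (Dmat U s).PosDef) :
    U.PosDef ∧ 0 < s := by
  refine ⟨PosDef.of_dotProduct_mulVec_pos ?_ ?_, ?_⟩
  · ext i j
    have := congrFun (congrFun hD.1 (Sum.inl i)) (Sum.inl j)
    simpa [Dmat, conjTranspose_apply, fromBlocks] using this
  · intro v hv
    have hv' : (Sum.elim v 0 : Fin d ⊕ Fin 1 → ℝ) ≠ 0 := fun h => hv (by
      funext i; exact congrFun h (Sum.inl i))
    have := hD.dotProduct_mulVec_pos hv'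
    rw [star_trivial, quad_Dmat] at this
    simpa using this
  · have h1 : (Sum.elim 0 1 : Fin d ⊕ Fin 1 → ℝ) ≠ 0 := fun h => by
      have := congrFun h (Sum.inr 0); simp at this
    have := hD.dotProduct_mulVec_pos h1
    rw [star_trivial, quad_Dmat] at this
    simpa [dotProduct] using this

lemma posDef_Sblk (U : Matrix (Fin d) (Fin d) ℝ) (t : Fin d → ℝ) {s : ℝ}
    (hU : U.PosDef) (hs : 0 < s) : (Sblk U t s).PosDef := by
  rw [Sblk_eq_reindex, reindex_apply]
  exact posDef_submatrix_equiv
    (by rw [Tblk_factor]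
        exact posDef_mul_mul_transpose (posDef_Dmat U hU hs) (by rw [det_Lmat]; exact isUnit_one))
    _

lemma posDef_Sblk_inv (U : Matrix (Fin d) (Fin d) ℝ) (t : Fin d → ℝ) {s : ℝ}
    (hS : (Sblk U t s).PosDef) : U.PosDef ∧ 0 < s := by
  have hT : (Tblk U t s).PosDef := by
    have := posDef_submatrix_equiv hS finSumFinEquiv
    rw [Sblk_eq_reindex, reindex_apply] at this
    simpa [submatrix_submatrix] using this
  rw [Tblk_factor] at hT
  exact posDef_Dmat_inv U
    (posDef_of_mul_mul_transpose hT (by rw [det_Lmat]; exact isUnit_one))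

lemma Ss_last_pos {Ss : Matrix (Fin (d+1)) (Fin (d+1)) ℝ} (hSs : Ss.PosDef) :
    0 < Ss (Fin.last d) (Fin.last d) := by
  have hz : (Pi.single (Fin.last d) 1 : Fin (d+1) → ℝ) ≠ 0 := by
    intro h; have := congrFun h (Fin.last d); simp at this
  have := hSs.dotProduct_mulVec_pos hz
  rw [star_trivial] at this
  simpa [dotProduct, mulVec, Pi.single_apply] using this

lemma symm_entries {m : Type*} [Fintype m] {M : Matrix m m ℝ} (hM : M.IsHermitian)
    (i j : m) : M i j = M j i := by
  have := congrFun (congrFun hM j) i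
  simpa [conjTranspose_apply] using this

lemma exists_decomp {Ss : Matrix (Fin (d+1)) (Fin (d+1)) ℝ} (hSs : Ss.PosDef) :
    ∃ U t s, Ss = Sblk U t s ∧ U.PosDef ∧ 0 < s := by
  set s0 := Ss (Fin.last d) (Fin.last d) with hs0def
  have hs0 : 0 < s0 := Ss_last_pos hSs
  set t0 : Fin d → ℝ := fun i => Ss i.castSucc (Fin.last d) / s0 with ht0def
  set U0 : Matrix (Fin d) (Fin d) ℝ :=
    Matrix.of (fun i j => Ss i.castSucc j.castSucc - s0 * t0 i * t0 j) with hU0def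
  have hdec : Ss = Sblk U0 t0 s0 := by
    ext i j
    induction i using Fin.lastCases with
    | last =>
      induction j using Fin.lastCases with
      | last => simp [Sblk]; rfl
      | cast j =>
        rw [symm_entries hSs.1]
        simp only [Sblk, Matrix.of_apply, Fin.snoc_last, Fin.snoc_castSucc, ht0def]
        field_simp
    | cast i =>
      induction j using Fin.lastCases with
      | last =>
        simp only [Sblk, Matrix.of_apply, Fin.snoc_last, Fin.snoc_castSucc, ht0def]
        field_simp
      | cast j =>
        simp only [Sblk, Matrix.of_apply, Fin.snoc_castSucc, hU0def]
        ring
  obtain ⟨hU0, _⟩ := posDef_Sblk_inv U0 t0 (hdec ▸ hSs)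
  exact ⟨U0, t0, s0, hdec, hU0, hs0⟩

lemma liftPt_comp (xv : Fin d → ℝ) :
    liftPt xv ∘ finSumFinEquiv = Sum.elim xv (fun _ => 1) := by
  funext p
  cases p with
  | inl i =>
    simp [liftPt, finSumFinEquiv_apply_left]
    exact Fin.snoc_castSucc _ _ _
  | inr i =>
    have : (Fin.natAdd d i : Fin (d+1)) = Fin.last d := by
      have : (i : Fin 1) = 0 := Subsingleton.elim _ _
      subst this; ext; simp
    simp [liftPt, finSumFinEquiv_apply_right, this]

lemma quad_inv (U : Matrix (Fin d) (Fin d) ℝ) (t : Fin d → ℝ) {s : ℝ}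
    (hU : U.PosDef) (hs : s ≠ 0) (xv : Fin d → ℝ) :
    liftPt xv ⬝ᵥ ((Sblk U t s)⁻¹ *ᵥ liftPt xv) = (xv - t) ⬝ᵥ (U⁻¹ *ᵥ (xv - t)) + s⁻¹ := by
  have hAone : ∀ (A : Matrix (Fin d) (Fin d) ℝ),
      (A * colt t) *ᵥ (fun _ => (1:ℝ)) = A *ᵥ t := by
    intro A; funext i
    simp [colt, mul_apply, mulVec, dotProduct, Fin.sum_univ_one]
  have hB : ∀ (A : Matrix (Fin d) (Fin d) ℝ) (v : Fin d → ℝ) (k : Fin 1),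
      (((colt t)ᵀ * A) *ᵥ v) k = t ⬝ᵥ (A *ᵥ v) := by
    intro A v k
    simp only [colt, mul_apply, mulVec, dotProduct, transpose_apply, Matrix.of_apply,
      Finset.sum_mul, Finset.mul_sum]
    rw [Finset.sum_comm]
    exact Finset.sum_congr rfl fun j _ => Finset.sum_congr rfl fun i _ => by ring
  rw [Sblk_eq_reindex, inv_reindex, reindex_apply, submatrix_mulVec_equiv,
    dotProduct_comp_equiv_symm, Equiv.symm_symm, liftPt_comp, Tblk_inv U t hU hs, Binv,
    fromBlocks_mulVec, sumElim_dotProduct_sumElim]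
  simp only [Sum.elim_comp_inl, Sum.elim_comp_inr]
  have h1 : (-(U⁻¹ * colt t)) *ᵥ (fun _ => (1:ℝ)) = -(U⁻¹ *ᵥ t) := by
    rw [neg_mulVec, hAone]
  have h2 : ∀ k : Fin 1, ((-((colt t)ᵀ * U⁻¹)) *ᵥ xv) k = -(t ⬝ᵥ (U⁻¹ *ᵥ xv)) := by
    intro k; rw [neg_mulVec]; simp [hB]
  have h3 : ∀ k : Fin 1, (((s⁻¹ • (1 : Matrix (Fin 1) (Fin 1) ℝ)
      + (colt t)ᵀ * U⁻¹ * colt t)) *ᵥ (fun _ => (1:ℝ))) k = s⁻¹ + t ⬝ᵥ (U⁻¹ *ᵥ t) := by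
    intro k
    have hk : k = 0 := Subsingleton.elim _ _
    subst hk
    rw [add_mulVec, Pi.add_apply, Matrix.mul_assoc, ← mulVec_mulVec, hAone]
    simp [smul_mulVec, colt, mulVec, dotProduct, Matrix.one_apply]
  have h5 : ((fun _ : Fin 1 => (1:ℝ)) ⬝ᵥ ((-((colt t)ᵀ * U⁻¹)) *ᵥ xv
      + (s⁻¹ • (1 : Matrix (Fin 1) (Fin 1) ℝ) + (colt t)ᵀ * U⁻¹ * colt t) *ᵥ (fun _ => (1:ℝ))))
      = -(t ⬝ᵥ (U⁻¹ *ᵥ xv)) + (s⁻¹ + t ⬝ᵥ (U⁻¹ *ᵥ t)) := by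
    simp [dotProduct, Fin.sum_univ_one, h2, h3]
  rw [h1, h5, mulVec_sub, sub_dotProduct, dotProduct_sub, dotProduct_sub,
    dotProduct_add, dotProduct_neg]
  ring

lemma det_Sblk (U : Matrix (Fin d) (Fin d) ℝ) (t : Fin d → ℝ) (s : ℝ) :
    (Sblk U t s).det = s * U.det := by
  rw [Sblk_eq_reindex, reindex_apply, det_submatrix_equiv_self, det_Tblk]

lemma log_qN_eq (U : Matrix (Fin d) (Fin d) ℝ) (t : Fin d → ℝ) {s : ℝ}
    (hU : U.PosDef) (hs : 0 < s) (xv : Fin d → ℝ) :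
    Real.log (qN (liftPt xv) (Sblk U t s)) =
      Real.log (pN xv t U) + (1 - Real.log s - s⁻¹) / 2 := by
  have hπ : (0:ℝ) < 2 * Real.pi := by positivity
  have he : (0:ℝ) < 2 * Real.pi * Real.exp 1 := by positivity
  have hdU := hU.det_pos
  have hsd : (0:ℝ) < s * U.det := by positivity
  unfold qN pN
  rw [quad_inv U t hU hs.ne', det_Sblk]
  rw [Real.log_mul (by positivity) (Real.exp_ne_zero _),
    Real.log_mul (by positivity) (by positivity),
    Real.log_mul (by positivity) ((Real.rpow_pos_of_pos hsd _).ne'),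
    Real.log_mul (by positivity) (Real.exp_ne_zero _),
    Real.log_mul ((Real.rpow_pos_of_pos hdU _).ne') (by positivity),
    Real.log_rpow he, Real.log_rpow hsd, Real.log_rpow hπ, Real.log_rpow hπ,
    Real.log_rpow hdU, Real.log_exp, Real.log_exp,
    Real.log_mul hπ.ne' (Real.exp_ne_zero _), Real.log_exp,
    Real.log_mul hs.ne' hdU.ne']
  ring

lemma Lhat_Sblk {n : ℕ} (x : Fin n → Fin d → ℝ) (U : Matrix (Fin d) (Fin d) ℝ)
    (t : Fin d → ℝ) {s : ℝ} (hU : U.PosDef) (hs : 0 < s) :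
    Lhat x (Sblk U t s) = Lgauss x t U + n * ((1 - Real.log s - s⁻¹) / 2) := by
  unfold Lhat Lgauss
  rw [Finset.sum_congr rfl fun i _ => log_qN_eq U t hU hs (x i), Finset.sum_add_distrib,
    Finset.sum_const, Finset.card_univ, Fintype.card_fin, nsmul_eq_mul]

lemma g_nonpos {s : ℝ} (hs : 0 < s) : (1 - Real.log s - s⁻¹) / 2 ≤ 0 := by
  have h := Real.log_le_sub_one_of_pos (inv_pos.2 hs)
  rw [Real.log_inv] at h
  linarith

end PenAux

/-- penalized reformulation. If the penalizer splits over the block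
parametrization with s-part uniquely maximized at s = 1, then the maximizer of the
penalized reformulated likelihood is the block matrix built from the unique maximizer
of the penalized Gaussian log-likelihood. -/
theorem penalized_reformulation {d n : ℕ} (hd : 1 ≤ d) (x : Fin n → Fin d → ℝ)
    (ψ : Matrix (Fin (d+1)) (Fin (d+1)) ℝ → ℝ)
    (ψ1 : Matrix (Fin d) (Fin d) ℝ → (Fin d → ℝ) → ℝ) (ψ2 : ℝ → ℝ)
    (hsplit : ∀ (U : Matrix (Fin d) (Fin d) ℝ) (t : Fin d → ℝ) (s : ℝ),
      U.PosDef → 0 < s → ψ (Sblk U t s) = ψ1 U t + ψ2 s)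
    (hψ2 : ∀ s : ℝ, 0 < s → s ≠ 1 → ψ2 s < ψ2 1)
    (Ss : Matrix (Fin (d+1)) (Fin (d+1)) ℝ) (hSs : Ss.PosDef)
    (hSmax : ∀ S : Matrix (Fin (d+1)) (Fin (d+1)) ℝ, S.PosDef →
      ψ S + Lhat x S ≤ ψ Ss + Lhat x Ss)
    (μs : Fin d → ℝ) (Cs : Matrix (Fin d) (Fin d) ℝ) (hCs : Cs.PosDef)
    (hmax : ∀ (μ : Fin d → ℝ) (C : Matrix (Fin d) (Fin d) ℝ), C.PosDef →
      ψ1 C μ + Lgauss x μ C ≤ ψ1 Cs μs + Lgauss x μs Cs)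
    (huniq : ∀ (μ : Fin d → ℝ) (C : Matrix (Fin d) (Fin d) ℝ), C.PosDef →
      ψ1 C μ + Lgauss x μ C = ψ1 Cs μs + Lgauss x μs Cs → μ = μs ∧ C = Cs) :
    Ss = Sblk Cs μs 1 := by
  classical
  obtain ⟨U0, t0, s0, hdec, hU0, hs0⟩ := PenAux.exists_decomp hSs
  have hg0 : (1 - Real.log s0 - s0⁻¹) / 2 ≤ 0 := PenAux.g_nonpos hs0
  have key1 : ψ Ss + Lhat x Ss
      = ψ1 U0 t0 + ψ2 s0 + (Lgauss x t0 U0 + n * ((1 - Real.log s0 - s0⁻¹) / 2)) := by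
    rw [hdec, hsplit _ _ _ hU0 hs0, PenAux.Lhat_Sblk x U0 t0 hU0 hs0]
  have key2 : ψ (Sblk Cs μs 1) + Lhat x (Sblk Cs μs 1) = ψ1 Cs μs + ψ2 1 + Lgauss x μs Cs := by
    rw [hsplit _ _ _ hCs one_pos, PenAux.Lhat_Sblk x Cs μs hCs one_pos]
    simp
  have hle := hSmax (Sblk Cs μs 1) (PenAux.posDef_Sblk Cs μs hCs one_pos)
  rw [key1, key2] at hle
  have hA : ψ1 U0 t0 + Lgauss x t0 U0 ≤ ψ1 Cs μs + Lgauss x μs Cs := hmax t0 U0 hU0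
  have hgn : (n : ℝ) * ((1 - Real.log s0 - s0⁻¹) / 2) ≤ 0 :=
    mul_nonpos_of_nonneg_of_nonpos (Nat.cast_nonneg n) hg0
  have hs01 : s0 = 1 := by
    by_contra h
    have h1 : ψ2 s0 < ψ2 1 := hψ2 s0 hs0 h
    linarith
  subst hs01
  have hz : (1 - Real.log 1 - (1:ℝ)⁻¹) / 2 = 0 := by simp
  rw [hz, mul_zero, add_zero] at hle
  have heq : ψ1 U0 t0 + Lgauss x t0 U0 = ψ1 Cs μs + Lgauss x μs Cs := by
    have hψ2le : ψ2 1 ≤ ψ2 1 := le_refl _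
    linarith
  obtain ⟨ht, hU⟩ := huniq t0 U0 hU0 heq
  rw [hdec, ht, hU]
end

section
/- The reformulated single-Gaussian log-likelihood L̂ is geodesically midpoint-concave on the manifold of symmetric positive definite (d+1)×(d+1) matrices: for all symmetric positive definite S, R ∈ ℝ^{(d+1)×(d+1)}, L̂(S # R) ≥ ½ L̂(S) + ½ L̂(R). -/
open Matrix Real

open Matrix Real
open scoped Classical

/-- The unique symmetric positive semidefinite square root of a positive semidefinite
matrix (junk value `0` if the matrix is not positive semidefinite). -/
noncomputable def psqrt {m : ℕ} (M : Matrix (Fin m) (Fin m) ℝ) : Matrix (Fin m) (Fin m) ℝ :=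
  if h : M.PosSemidef then
    (h.1.eigenvectorUnitary : Matrix (Fin m) (Fin m) ℝ) *
      diagonal ((↑) ∘ Real.sqrt ∘ h.1.eigenvalues) *
      (star h.1.eigenvectorUnitary : Matrix (Fin m) (Fin m) ℝ) else 0

/-- The geometric mean `S # R = S^{1/2} (S^{-1/2} R S^{-1/2})^{1/2} S^{1/2}` of two
positive definite matrices: the midpoint of the geodesic joining them in the
affine-invariant Riemannian metric. -/
noncomputable def geoMean {m : ℕ} (S R : Matrix (Fin m) (Fin m) ℝ) :
    Matrix (Fin m) (Fin m) ℝ :=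
  psqrt S * psqrt ((psqrt S)⁻¹ * R * (psqrt S)⁻¹) * psqrt S


section Aux

variable {m : ℕ}

lemma psqrt_spec {M : Matrix (Fin m) (Fin m) ℝ} (h : M.PosSemidef) :
    (psqrt M).PosSemidef ∧ psqrt M * psqrt M = M := by
  unfold psqrt
  rw [dif_pos h]
  set U : Matrix (Fin m) (Fin m) ℝ := (h.1.eigenvectorUnitary : Matrix (Fin m) (Fin m) ℝ) with hU
  have hsU : (star h.1.eigenvectorUnitary : Matrix (Fin m) (Fin m) ℝ) = Uᴴ := by
    rw [hU]; exact Matrix.star_eq_conjTranspose _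
  have hUU : Uᴴ * U = 1 := by
    rw [← hsU, hU]; exact Unitary.coe_star_mul_self _
  have hspec := h.1.spectral_theorem
  rw [Unitary.conjStarAlgAut_apply] at hspec
  rw [hsU]
  constructor
  · apply Matrix.PosSemidef.mul_mul_conjTranspose_same
    rw [Matrix.posSemidef_diagonal_iff]
    intro i
    simp [Real.sqrt_nonneg]
  · calc U * diagonal ((↑) ∘ Real.sqrt ∘ h.1.eigenvalues) * Uᴴ *
          (U * diagonal ((↑) ∘ Real.sqrt ∘ h.1.eigenvalues) * Uᴴ)
        = U * (diagonal ((↑) ∘ Real.sqrt ∘ h.1.eigenvalues) * (Uᴴ * U) *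
          diagonal ((↑) ∘ Real.sqrt ∘ h.1.eigenvalues)) * Uᴴ := by
          simp only [Matrix.mul_assoc]
      _ = M := by
          rw [hUU, Matrix.mul_one, diagonal_mul_diagonal]
          conv_rhs => rw [hspec]
          rw [hsU]
          congr 2
          congr 1
          funext i
          simp [Real.mul_self_sqrt (h.eigenvalues_nonneg i)]

lemma posDef_of_posSemidef_isUnit {A : Matrix (Fin m) (Fin m) ℝ}
    (hA : A.PosSemidef) (hU : IsUnit A) : A.PosDef := by
  exact hA.posDef_iff_isUnit.mpr hU

lemma sym_of_hermitian {A : Matrix (Fin m) (Fin m) ℝ} (hA : A.IsHermitian) : Aᵀ = A := by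
  rw [← Matrix.conjTranspose_eq_transpose_of_trivial]; exact hA.eq

lemma dot_sym_mul {A B : Matrix (Fin m) (Fin m) ℝ} (hA : Aᵀ = A) (y : Fin m → ℝ) :
    y ⬝ᵥ ((A * B * A) *ᵥ y) = (A *ᵥ y) ⬝ᵥ (B *ᵥ (A *ᵥ y)) := by
  rw [← Matrix.mulVec_mulVec, ← Matrix.mulVec_mulVec, Matrix.dotProduct_mulVec y A,
    ← hA, Matrix.vecMul_transpose, hA]

lemma quad_ineq {N : Matrix (Fin m) (Fin m) ℝ} (hN : Nᵀ = N) (z : Fin m → ℝ) :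
    z ⬝ᵥ (N *ᵥ z) ≤ (1/2) * (z ⬝ᵥ z) + (1/2) * (z ⬝ᵥ ((N * N) *ᵥ z)) := by
  have hP : ((1 - N)ᵀ * (1 - N)).PosSemidef := by
    have := Matrix.posSemidef_conjTranspose_mul_self (1 - N)
    rwa [Matrix.conjTranspose_eq_transpose_of_trivial] at this
  have h0 : (0:ℝ) ≤ z ⬝ᵥ (((1 - N)ᵀ * (1 - N)) *ᵥ z) := by
    simpa using hP.dotProduct_mulVec_nonneg z
  have hE : (1 - N)ᵀ * (1 - N) = 1 - N - N + N * N := by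
    rw [Matrix.transpose_sub, Matrix.transpose_one, hN]
    noncomm_ring
  rw [hE] at h0
  simp only [Matrix.add_mulVec, Matrix.sub_mulVec, Matrix.one_mulVec,
    dotProduct_add, dotProduct_sub] at h0
  linarith

lemma geoMean_props {S R : Matrix (Fin m) (Fin m) ℝ} (hS : S.PosDef) (hR : R.PosDef) :
    (geoMean S R).PosDef ∧
    Real.log (geoMean S R).det = (1/2) * Real.log S.det + (1/2) * Real.log R.det ∧
    ∀ y : Fin m → ℝ, y ⬝ᵥ ((geoMean S R)⁻¹ *ᵥ y) ≤
      (1/2) * (y ⬝ᵥ (S⁻¹ *ᵥ y)) + (1/2) * (y ⬝ᵥ (R⁻¹ *ᵥ y)) := by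
  classical
  set T := psqrt S with hTdef
  have hTps : T.PosSemidef := (psqrt_spec hS.posSemidef).1
  have hTT : T * T = S := (psqrt_spec hS.posSemidef).2
  have hTpd : T.PosDef := by
    apply posDef_of_posSemidef_isUnit hTps
    apply (Matrix.isUnit_iff_isUnit_det _).2
    have h : IsUnit (T.det * T.det) := by
      rw [← Matrix.det_mul, hTT]; exact hS.det_pos.ne'.isUnit
    exact isUnit_of_mul_isUnit_left h
  have hTsym : Tᵀ = T := sym_of_hermitian hTps.1
  have hTdet : IsUnit T.det := hTpd.det_pos.ne'.isUnit
  have hTu : IsUnit T := (Matrix.isUnit_iff_isUnit_det _).2 hTdet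
  have hTiu : IsUnit T⁻¹ := Matrix.isUnit_nonsing_inv_iff.2 hTu
  have hTisym : (T⁻¹)ᵀ = T⁻¹ := by rw [Matrix.transpose_nonsing_inv, hTsym]
  set M := T⁻¹ * R * T⁻¹ with hM
  have hMps : M.PosSemidef := by
    have h := hR.posSemidef.conjTranspose_mul_mul_same (T⁻¹)
    rwa [Matrix.conjTranspose_eq_transpose_of_trivial, hTisym] at h
  have hMpd : M.PosDef := posDef_of_posSemidef_isUnit hMps ((hTiu.mul hR.isUnit).mul hTiu)
  set N := psqrt M with hNdef
  have hNps : N.PosSemidef := (psqrt_spec hMps).1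
  have hNN : N * N = M := (psqrt_spec hMps).2
  have hNpd : N.PosDef := by
    apply posDef_of_posSemidef_isUnit hNps
    apply (Matrix.isUnit_iff_isUnit_det _).2
    have h : IsUnit (N.det * N.det) := by
      rw [← Matrix.det_mul, hNN]; exact hMpd.det_pos.ne'.isUnit
    exact isUnit_of_mul_isUnit_left h
  have hNsym : Nᵀ = N := sym_of_hermitian hNps.1
  have hNdet : IsUnit N.det := hNpd.det_pos.ne'.isUnit
  have hNu : IsUnit N := (Matrix.isUnit_iff_isUnit_det _).2 hNdet
  have hG : geoMean S R = T * N * T := by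
    rw [geoMean, ← hTdef, ← hM, ← hNdef]
  have hRTMT : T * M * T = R := by
    rw [hM]
    simp [Matrix.mul_assoc, Matrix.nonsing_inv_mul _ hTdet,
      Matrix.mul_nonsing_inv_cancel_left _ _ hTdet]
  have hGps : (geoMean S R).PosSemidef := by
    rw [hG]
    have h := hNps.mul_mul_conjTranspose_same T
    rwa [Matrix.conjTranspose_eq_transpose_of_trivial, hTsym] at h
  have hGpd : (geoMean S R).PosDef :=
    posDef_of_posSemidef_isUnit hGps (by rw [hG]; exact (hTu.mul hNu).mul hTu)
  refine ⟨hGpd, ?_, ?_⟩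
  · have ha : (0:ℝ) < T.det := hTpd.det_pos
    have hb : (0:ℝ) < N.det := hNpd.det_pos
    have h1 : (geoMean S R).det = T.det * N.det * T.det := by
      rw [hG, Matrix.det_mul, Matrix.det_mul]
    have h2 : S.det = T.det * T.det := by rw [← hTT, Matrix.det_mul]
    have h3 : R.det = T.det * (N.det * N.det) * T.det := by
      rw [← hRTMT, Matrix.det_mul, Matrix.det_mul, ← hNN, Matrix.det_mul]
    rw [h1, h2, h3]
    rw [Real.log_mul (mul_ne_zero ha.ne' hb.ne') ha.ne', Real.log_mul ha.ne' hb.ne',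
      Real.log_mul ha.ne' ha.ne',
      Real.log_mul (mul_ne_zero ha.ne' (mul_ne_zero hb.ne' hb.ne')) ha.ne',
      Real.log_mul ha.ne' (mul_ne_zero hb.ne' hb.ne'), Real.log_mul hb.ne' hb.ne']
    ring
  · intro y
    have hGinv : (geoMean S R)⁻¹ = T⁻¹ * N⁻¹ * T⁻¹ := by
      rw [hG, Matrix.mul_inv_rev, Matrix.mul_inv_rev]
      simp [Matrix.mul_assoc]
    have hSinv : S⁻¹ = T⁻¹ * 1 * T⁻¹ := by
      rw [← hTT, Matrix.mul_inv_rev, Matrix.mul_one]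
    have hRinv : R⁻¹ = T⁻¹ * (N⁻¹ * N⁻¹) * T⁻¹ := by
      rw [← hRTMT, Matrix.mul_inv_rev, Matrix.mul_inv_rev, ← hNN, Matrix.mul_inv_rev]
      simp [Matrix.mul_assoc]
    rw [hGinv, hSinv, hRinv, dot_sym_mul hTisym, dot_sym_mul hTisym, dot_sym_mul hTisym,
      Matrix.one_mulVec]
    exact quad_ineq (by rw [Matrix.transpose_nonsing_inv, hNsym]) (T⁻¹ *ᵥ y)

lemma log_qN {d : ℕ} (y : Fin (d+1) → ℝ) {S : Matrix (Fin (d+1)) (Fin (d+1)) ℝ}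
    (hS : S.PosDef) :
    Real.log (qN y S) = (1/2) * Real.log (2 * Real.pi * Real.exp 1)
      + (-((d:ℝ)+1)/2) * Real.log (2 * Real.pi)
      - (1/2) * Real.log S.det - (1/2) * (y ⬝ᵥ (S⁻¹ *ᵥ y)) := by
  have h2pi : (0:ℝ) < 2 * Real.pi := by positivity
  have h2pie : (0:ℝ) < 2 * Real.pi * Real.exp 1 := by positivity
  have hdet : (0:ℝ) < S.det := hS.det_pos
  rw [qN, Real.log_mul (by positivity) (Real.exp_ne_zero _),
    Real.log_mul (mul_ne_zero (by positivity) (Real.rpow_pos_of_pos hdet _).ne') (by positivity),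
    Real.log_mul (by positivity) (Real.rpow_pos_of_pos hdet _).ne',
    Real.log_rpow h2pie, Real.log_rpow hdet, Real.log_rpow h2pi, Real.log_exp]
  ring

end Aux

/-- the reformulated single-Gaussian log-likelihood is geodesically
midpoint-concave on the positive definite matrices. -/
theorem Lhat_geodesically_midpoint_concave {d n : ℕ} (hd : 1 ≤ d) (x : Fin n → Fin d → ℝ)
    (S R : Matrix (Fin (d+1)) (Fin (d+1)) ℝ) (hS : S.PosDef) (hR : R.PosDef) :
    (1/2) * Lhat x S + (1/2) * Lhat x R ≤ Lhat x (geoMean S R) := by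
  obtain ⟨hGpd, hdet, hquad⟩ := geoMean_props hS hR
  simp only [Lhat]
  rw [Finset.mul_sum, Finset.mul_sum, ← Finset.sum_add_distrib]
  apply Finset.sum_le_sum
  intro i _
  rw [log_qN _ hS, log_qN _ hR, log_qN _ hGpd, hdet]
  have h := hquad (liftPt (x i))
  linarith
end

section
/- In addition to the hypotheses of the SGD lemma (almost surely F_{t+1} ≤ F_t + ⟨G_t, −η_t(G_t − Δ_t)⟩ + (L/2)‖η_t(G_t − Δ_t)‖² for t ≤ T and F_{T+1} ≥ f*; E[⟨G_t, Δ_t⟩] = 0; E[‖Δ_t‖²] ≤ σ²), assume σ > 0, c > 0, E[F₁] ≥ f*, and that the stepsize is constant, η_t = η = min{1/L, c σ^{−1} T^{−1/2}}. Then the expected squared gradient norm of a uniformly randomly chosen iterate satisfies (1/T) Σ_{t=1}^T E[‖G_t‖²] ≤ 2L Δ₁ / T + (2Δ₁/c + L c) σ / √T, where Δ₁ = E[F₁] − f*. In particular the expected gap to stationarity is O(1/T) + O(1/√T). -/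
open MeasureTheory

lemma step_pt {H : Type*} [NormedAddCommGroup H] [InnerProductSpace ℝ H]
    (η L : ℝ) (g d : H) :
    (inner ℝ g (-η • (g - d)) : ℝ) + L/2 * ‖η • (g - d)‖^2
      = -(η - L*η^2/2) * ‖g‖^2 + (η - L*η^2) * (inner ℝ g d : ℝ) + (L*η^2/2) * ‖d‖^2 := by
  rw [real_inner_smul_right, inner_sub_right, real_inner_self_eq_norm_sq, norm_smul,
    mul_pow, Real.norm_eq_abs, sq_abs, norm_sub_sq_real]
  ring

set_option maxHeartbeats 1000000

/-- convergence rate for (Riemannian) SGD with the constant stepsize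
`η = min (1/L) (c σ⁻¹ T^{-1/2})`: the average expected squared gradient norm (i.e. the
expected squared gradient norm of a uniformly randomly chosen iterate) is
`O(1/T) + O(1/√T)`. Here `F 0 = F₁` and `F (Fin.last T) = F_{T+1}`. -/
theorem riemannian_sgd_rate {Ω : Type*} [MeasureSpace Ω]
    [IsProbabilityMeasure (volume : Measure Ω)]
    {H : Type*} [NormedAddCommGroup H] [InnerProductSpace ℝ H]
    (T : ℕ) (hT : 1 ≤ T) (L : ℝ) (hL : 0 < L) (σ : ℝ) (hσ : 0 < σ) (fstar : ℝ)
    (c : ℝ) (hc : 0 < c)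
    (η : ℝ) (hη : η = min (1/L) (c / (σ * Real.sqrt T)))
    (F : Fin (T+1) → Ω → ℝ) (G Δ : Fin T → Ω → H)
    (hFint : ∀ t, Integrable (F t))
    (hGint : ∀ t, Integrable (fun ω => ‖G t ω‖^2))
    (hΔint : ∀ t, Integrable (fun ω => ‖Δ t ω‖^2))
    (hGΔint : ∀ t, Integrable (fun ω => (inner ℝ (G t ω) (Δ t ω) : ℝ)))
    (hstep : ∀ᵐ ω ∂(volume : Measure Ω), ∀ t : Fin T,
      F t.succ ω ≤ F t.castSucc ω
        + (inner ℝ (G t ω) (-η • (G t ω - Δ t ω)) : ℝ)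
        + L/2 * ‖η • (G t ω - Δ t ω)‖^2)
    (hlast : ∀ᵐ ω ∂(volume : Measure Ω), fstar ≤ F (Fin.last T) ω)
    (hunbiased : ∀ t : Fin T, ∫ ω, (inner ℝ (G t ω) (Δ t ω) : ℝ) = 0)
    (hvar : ∀ t : Fin T, (∫ ω, ‖Δ t ω‖^2) ≤ σ^2)
    (hF1 : fstar ≤ ∫ ω, F 0 ω) :
    (1 / (T : ℝ)) * ∑ t : Fin T, (∫ ω, ‖G t ω‖^2)
      ≤ 2 * L * ((∫ ω, F 0 ω) - fstar) / T
        + (2 * ((∫ ω, F 0 ω) - fstar) / c + L * c) * σ / Real.sqrt T := by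
  have hTpos : (0:ℝ) < T := by exact_mod_cast Nat.lt_of_lt_of_le Nat.zero_lt_one hT
  set sT := Real.sqrt T with hsTdef
  have hsT : (0:ℝ) < sT := Real.sqrt_pos.mpr hTpos
  have hT2 : sT^2 = (T:ℝ) := Real.sq_sqrt hTpos.le
  have hηpos : 0 < η := by
    rw [hη]; exact lt_min (by positivity) (by positivity)
  have hη1 : η ≤ 1/L := hη ▸ min_le_left _ _
  have hη2 : η ≤ c/(σ*sT) := hη ▸ min_le_right _ _
  clear_value sT
  -- per-step inequality in expectation
  have key : ∀ t : Fin T, (η - L*η^2/2) * (∫ ω, ‖G t ω‖^2)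
      ≤ ((∫ ω, F t.castSucc ω) - ∫ ω, F t.succ ω) + (L*η^2/2)*σ^2 := by
    intro t
    have hI1 : Integrable (fun ω => -(η - L*η^2/2) * ‖G t ω‖^2) := (hGint t).const_mul _
    have hI2 : Integrable (fun ω => (η - L*η^2) * (inner ℝ (G t ω) (Δ t ω) : ℝ)) :=
      (hGΔint t).const_mul _
    have hI3 : Integrable (fun ω => (L*η^2/2) * ‖Δ t ω‖^2) := (hΔint t).const_mul _
    have hmono : ∫ ω, F t.succ ω ≤ ∫ ω, (F t.castSucc ω
        + (-(η - L*η^2/2) * ‖G t ω‖^2 + (η - L*η^2) * (inner ℝ (G t ω) (Δ t ω) : ℝ)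
          + (L*η^2/2) * ‖Δ t ω‖^2)) := by
      refine integral_mono_ae (hFint _) ((hFint _).add ((hI1.add hI2).add hI3)) ?_
      filter_upwards [hstep] with ω hω
      refine le_trans (hω t) (le_of_eq ?_)
      linear_combination step_pt η L (G t ω) (Δ t ω)
    have h1 := integral_add (μ := volume) (hFint t.castSucc) ((hI1.add hI2).add hI3)
    have h2 := integral_add (μ := volume) (hI1.add hI2) hI3
    have h3 := integral_add (μ := volume) hI1 hI2
    simp only [Pi.add_apply] at h1 h2 h3
    rw [h1, h2, h3, integral_const_mul, integral_const_mul, integral_const_mul,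
      hunbiased t] at hmono
    have hv : (L*η^2/2) * (∫ ω, ‖Δ t ω‖^2) ≤ (L*η^2/2) * σ^2 :=
      mul_le_mul_of_nonneg_left (hvar t) (by positivity)
    linarith
  -- telescoping
  set g : ℕ → ℝ := fun n => ∫ ω, F ⟨min n T, Nat.lt_succ_of_le (min_le_right n T)⟩ ω with hg
  have gval : ∀ (n : ℕ) (h : n < T+1), g n = ∫ ω, F ⟨n, h⟩ ω := by
    intro n h
    simp only [hg]
    have : (⟨min n T, Nat.lt_succ_of_le (min_le_right n T)⟩ : Fin (T+1)) = ⟨n, h⟩ := by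
      ext; simp; omega
    rw [this]
  have hsum : ∑ t : Fin T, ((∫ ω, F t.castSucc ω) - ∫ ω, F t.succ ω)
      = (∫ ω, F 0 ω) - ∫ ω, F (Fin.last T) ω := by
    have step : ∀ t : Fin T, (∫ ω, F t.castSucc ω) - (∫ ω, F t.succ ω)
        = g (t:ℕ) - g ((t:ℕ)+1) := by
      intro t
      rw [gval (t:ℕ) (Nat.lt_succ_of_lt t.isLt), gval ((t:ℕ)+1) (Nat.succ_lt_succ t.isLt)]
      have e1 : (⟨(t:ℕ), Nat.lt_succ_of_lt t.isLt⟩ : Fin (T+1)) = t.castSucc := by ext; simp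
      have e2 : (⟨(t:ℕ)+1, Nat.succ_lt_succ t.isLt⟩ : Fin (T+1)) = t.succ := by ext; simp
      rw [e1, e2]
    calc ∑ t : Fin T, ((∫ ω, F t.castSucc ω) - ∫ ω, F t.succ ω)
        = ∑ t : Fin T, (g (t:ℕ) - g ((t:ℕ)+1)) := Finset.sum_congr rfl fun t _ => step t
      _ = ∑ n ∈ Finset.range T, (g n - g (n+1)) :=
          Fin.sum_univ_eq_sum_range (fun n => g n - g (n+1)) T
      _ = g 0 - g T := Finset.sum_range_sub' g T
      _ = (∫ ω, F 0 ω) - ∫ ω, F (Fin.last T) ω := by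
          have z0 : (⟨0, Nat.succ_pos T⟩ : Fin (T+1)) = 0 := by ext; simp
          have zl : (⟨T, Nat.lt_succ_self T⟩ : Fin (T+1)) = Fin.last T := by
            ext; simp [Fin.last]
          rw [gval 0 (Nat.succ_pos T), gval T (Nat.lt_succ_self T), z0, zl]
  have hlastInt : fstar ≤ ∫ ω, F (Fin.last T) ω := by
    have := integral_mono_ae (integrable_const fstar) (hFint _) hlast
    simpa using this
  set D := (∫ ω, F 0 ω) - fstar with hD
  have hDpos : 0 ≤ D := by simp only [hD]; linarith
  set A := ∑ t : Fin T, (∫ ω, ‖G t ω‖^2) with hA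
  have hAnn : 0 ≤ A := Finset.sum_nonneg fun t _ => integral_nonneg fun ω => by positivity
  have main : (η - L*η^2/2) * A ≤ D + (T:ℝ) * ((L*η^2/2)*σ^2) := by
    calc (η - L*η^2/2) * A = ∑ t : Fin T, (η - L*η^2/2) * (∫ ω, ‖G t ω‖^2) := by
          rw [hA, Finset.mul_sum]
      _ ≤ ∑ t : Fin T, (((∫ ω, F t.castSucc ω) - ∫ ω, F t.succ ω) + (L*η^2/2)*σ^2) :=
          Finset.sum_le_sum fun t _ => key t
      _ = ((∫ ω, F 0 ω) - ∫ ω, F (Fin.last T) ω) + (T:ℝ) * ((L*η^2/2)*σ^2) := by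
          rw [Finset.sum_add_distrib, hsum, Finset.sum_const, Finset.card_univ,
            Fintype.card_fin, nsmul_eq_mul]
      _ ≤ D + (T:ℝ) * ((L*η^2/2)*σ^2) := by simp only [hD]; linarith
  have hηL : η * L ≤ 1 := (le_div_iff₀ hL).mp hη1
  have hhalf : η/2 ≤ η - L*η^2/2 := by
    nlinarith [mul_nonneg hηpos.le (sub_nonneg.mpr hηL)]
  have m1 : (η/2) * A ≤ D + (T:ℝ) * ((L*η^2/2)*σ^2) :=
    le_trans (mul_le_mul_of_nonneg_right hhalf hAnn) main
  have m2 : A ≤ (2*D)*(1/η) + (T:ℝ)*(L*η*σ^2) := by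
    have h2η : (0:ℝ) < 2/η := by positivity
    calc A = (2/η)*((η/2)*A) := by field_simp
      _ ≤ (2/η)*(D + (T:ℝ)*((L*η^2/2)*σ^2)) := mul_le_mul_of_nonneg_left m1 h2η.le
      _ = (2*D)*(1/η) + (T:ℝ)*(L*η*σ^2) := by field_simp
  have hkey : 1 ≤ η * (L + σ*sT/c) := by
    rcases le_total (1/L) (c/(σ*sT)) with h | h
    · have h1 : η = 1/L := by rw [hη, min_eq_left h]
      have e : η * L = 1 := by rw [h1, one_div, inv_mul_cancel₀ hL.ne']
      nlinarith [mul_nonneg hηpos.le (div_pos (mul_pos hσ hsT) hc).le]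
    · have h1 : η = c/(σ*sT) := by rw [hη, min_eq_right h]
      have e : η * (σ*sT/c) = 1 := by
        rw [h1, div_mul_div_comm, mul_comm c (σ*sT)]
        exact div_self (mul_pos (mul_pos hσ hsT) hc).ne'
      nlinarith [mul_nonneg hηpos.le hL.le]
  have hinv : 1/η ≤ L + σ*sT/c := by
    rw [div_le_iff₀ hηpos]; linarith [hkey]
  have m3 : A ≤ 2*D*(L + σ*sT/c) + (T:ℝ)*(L*(c/(σ*sT))*σ^2) := by
    have t1 : (2*D)*(1/η) ≤ (2*D)*(L + σ*sT/c) :=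
      mul_le_mul_of_nonneg_left hinv (by positivity)
    have t2 : (T:ℝ)*(L*η*σ^2) ≤ (T:ℝ)*(L*(c/(σ*sT))*σ^2) :=
      mul_le_mul_of_nonneg_left
        (mul_le_mul_of_nonneg_right (mul_le_mul_of_nonneg_left hη2 hL.le) (sq_nonneg σ))
        hTpos.le
    linarith
  have hRHS : 2*D*(L + σ*sT/c) + (T:ℝ)*(L*(c/(σ*sT))*σ^2)
      = (T:ℝ) * (2 * L * D / T + (2 * D / c + L * c) * σ / sT) := by
    rw [← hT2]; field_simp [hsT.ne', hσ.ne', hc.ne']; ring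
  calc (1 / (T:ℝ)) * A ≤ (1 / (T:ℝ)) * ((T:ℝ) * (2 * L * D / T + (2 * D / c + L * c) * σ / sT)) := by
        refine mul_le_mul_of_nonneg_left ?_ (by positivity)
        rw [← hRHS]; exact m3
    _ = 2 * L * D / T + (2 * D / c + L * c) * σ / sT := by
        rw [one_div, inv_mul_cancel_left₀ hTpos.ne']
end

section
/- Let T ≥ 1 be an integer, L > 0, G > 0, f* ∈ ℝ. Let F₁,…,F_{T+1} ∈ ℝ with F_{T+1} ≥ f* and F₁ > f*, and let N₁,…,N_T ≥ 0 be nonnegative reals. Set c = √(2(F₁ − f*)/L) / G and η = c/√T, and assume F_{t+1} ≤ F_t − η N_t + (L/2) η² G² for each t ∈ {1,…,T}. Then min_{1 ≤ t ≤ T} N_t ≤ G √(2 L (F₁ − f*)) / √T; in particular min_{1 ≤ t ≤ T} N_t = O(1/√T). -/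
set_option maxHeartbeats 800000


/-- analytic core of the O(1/√T) corollary for Riemannian SGD with
G-bounded gradient, with the optimized constant `c = √(2(F₁ - f*)/L)/G`.
Here `F 0 = F₁` and `F (Fin.last T) = F_{T+1}`. -/
theorem sgd_bounded_gradient_min_rate (T : ℕ) (hT : 1 ≤ T)
    (L G fstar : ℝ) (hL : 0 < L) (hG : 0 < G)
    (F : Fin (T+1) → ℝ) (hlast : fstar ≤ F (Fin.last T)) (hF1 : fstar < F 0)
    (N : Fin T → ℝ) (hN : ∀ t, 0 ≤ N t)
    (c : ℝ) (hc : c = Real.sqrt (2 * (F 0 - fstar) / L) / G)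
    (η : ℝ) (hη : η = c / Real.sqrt T)
    (hstep : ∀ t : Fin T, F t.succ ≤ F t.castSucc - η * N t + L/2 * η^2 * G^2) :
    Finset.univ.inf' (Finset.univ_nonempty_iff.mpr ⟨⟨0, hT⟩⟩) N
      ≤ G * Real.sqrt (2 * L * (F 0 - fstar)) / Real.sqrt T := by
  have hΔ : 0 < F 0 - fstar := by linarith
  have hTR : (1:ℝ) ≤ (T:ℝ) := by exact_mod_cast hT
  have hTpos : (0:ℝ) < (T:ℝ) := by linarith
  have hs : (0:ℝ) < Real.sqrt T := Real.sqrt_pos.mpr hTpos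
  have hs2 : Real.sqrt T ^ 2 = (T:ℝ) := Real.sq_sqrt hTpos.le
  have hcpos : 0 < c := by
    rw [hc]
    positivity
  have hηpos : 0 < η := by rw [hη]; positivity
  have hc2 : c ^ 2 = 2 * (F 0 - fstar) / (L * G ^ 2) := by
    rw [hc, div_pow, Real.sq_sqrt (by positivity), div_div]
  have hΔeq : F 0 - fstar = L * G ^ 2 * c ^ 2 / 2 := by
    rw [hc2]; field_simp
  -- telescoping
  set g : ℕ → ℝ := fun i => F ⟨min i T, Nat.lt_succ_of_le (min_le_right i T)⟩ with hg
  have hgcast : ∀ t : Fin T, F t.castSucc = g t := by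
    intro t
    have : min (t : ℕ) T = (t : ℕ) := min_eq_left t.2.le
    simp only [hg]
    congr 1
    exact (Fin.ext this.symm)
  have hgsucc : ∀ t : Fin T, F t.succ = g ((t : ℕ) + 1) := by
    intro t
    have : min ((t : ℕ) + 1) T = (t : ℕ) + 1 := min_eq_left t.2
    simp only [hg]
    congr 1
    exact (Fin.ext this.symm)
  have hg0 : g 0 = F 0 := by
    simp only [hg]
    congr 1
  have hgT : g T = F (Fin.last T) := by
    simp only [hg]
    congr 1
    exact Fin.ext (min_self T)
  have tel : ∑ t : Fin T, (F t.castSucc - F t.succ) = F 0 - F (Fin.last T) := by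
    calc ∑ t : Fin T, (F t.castSucc - F t.succ)
        = ∑ t : Fin T, (g (t : ℕ) - g ((t : ℕ) + 1)) := by
          refine Finset.sum_congr rfl fun t _ => ?_
          rw [hgcast t, hgsucc t]
      _ = ∑ i ∈ Finset.range T, (g i - g (i + 1)) :=
          Fin.sum_univ_eq_sum_range (fun i => g i - g (i+1)) T
      _ = g 0 - g T := Finset.sum_range_sub' g T
      _ = F 0 - F (Fin.last T) := by rw [hg0, hgT]
  have hsum : η * ∑ t, N t ≤ (F 0 - fstar) + (T:ℝ) * (L/2 * η^2 * G^2) := by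
    rw [Finset.mul_sum]
    calc ∑ t, η * N t ≤ ∑ t : Fin T, (F t.castSucc - F t.succ + L/2 * η^2 * G^2) := by
          refine Finset.sum_le_sum fun t _ => ?_
          linarith [hstep t]
      _ = (∑ t : Fin T, (F t.castSucc - F t.succ)) + (T:ℝ) * (L/2 * η^2 * G^2) := by
          rw [Finset.sum_add_distrib, Finset.sum_const, Finset.card_univ, Fintype.card_fin,
            nsmul_eq_mul]
      _ = (F 0 - F (Fin.last T)) + (T:ℝ) * (L/2 * η^2 * G^2) := by rw [tel]
      _ ≤ (F 0 - fstar) + (T:ℝ) * (L/2 * η^2 * G^2) := by linarith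
  set m := Finset.univ.inf' (Finset.univ_nonempty_iff.mpr ⟨⟨0, hT⟩⟩) N with hm
  have hmle : ∀ t : Fin T, m ≤ N t := fun t => Finset.inf'_le _ (Finset.mem_univ t)
  have hTm : (T:ℝ) * m ≤ ∑ t, N t := by
    calc (T:ℝ) * m = ∑ _t : Fin T, m := by
          rw [Finset.sum_const, Finset.card_univ, Fintype.card_fin, nsmul_eq_mul]
      _ ≤ ∑ t, N t := Finset.sum_le_sum fun t _ => hmle t
  have h1 : η * ((T:ℝ) * m) ≤ (F 0 - fstar) + (T:ℝ) * (L/2 * η^2 * G^2) :=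
    le_trans (by nlinarith [hTm]) hsum
  have hηT : η * (T:ℝ) = c * Real.sqrt T := by
    rw [hη]; field_simp
    linear_combination (-1) * hs2
  have hη2T : η^2 * (T:ℝ) = c^2 := by
    rw [← hs2, hη, div_pow]; field_simp
  have hsqrt : Real.sqrt (2 * L * (F 0 - fstar)) = L * G * c := by
    have h2 : 2 * L * (F 0 - fstar) = (L * G * c) ^ 2 := by
      rw [hΔeq]; ring
    rw [h2, Real.sqrt_sq (by positivity)]
  have hmain : c * Real.sqrt T * m ≤ L * G^2 * c^2 := by
    have e1 : η * ((T:ℝ) * m) = (η * (T:ℝ)) * m := by ring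
    have e2 : (T:ℝ) * (L/2 * η^2 * G^2) = L/2 * G^2 * (η^2 * (T:ℝ)) := by ring
    rw [e1, hηT, e2, hη2T] at h1
    nlinarith [h1, hΔeq]
  have hmain2 : Real.sqrt T * m ≤ L * G^2 * c :=
    le_of_mul_le_mul_left (by nlinarith [hmain]) hcpos
  rw [hsqrt, le_div_iff₀ hs]
  nlinarith [hmain2]
end

section
/- Let S and Ψ be real symmetric m×m matrices with S positive definite and Ψ positive semidefinite, let y ∈ ℝ^m, and let w ∈ [0,1], η ∈ (0,1], and let n, ρ, β be reals with n > 0, β > 0 and 0 < ρ ≤ n. Define the updated matrix S' = (1 − η(w + ρ/n)/2) S + η ((w/2) y yᵀ + (β/(2n)) Ψ). Then λ_min(S') ≥ min( λ_min(S), (β/(n+ρ)) λ_min(Ψ) ). (This is the single-step estimate showing that the smallest eigenvalue of the covariance-type iterates of SGD for the penalized GMM likelihood stays bounded away from zero, part of the proof that the SGD iterates remain in a compact set.) -/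
open scoped Classical
open Matrix

/-- The smallest eigenvalue of a real symmetric matrix (junk value `0` if not symmetric). -/
noncomputable def lambdaMin {m : ℕ} (A : Matrix (Fin m) (Fin m) ℝ) : ℝ :=
  if h : A.IsHermitian then ⨅ i, h.eigenvalues i else 0

/-- The largest eigenvalue of a real symmetric matrix (junk value `0` if not symmetric). -/
noncomputable def lambdaMax {m : ℕ} (A : Matrix (Fin m) (Fin m) ℝ) : ℝ :=
  if h : A.IsHermitian then ⨆ i, h.eigenvalues i else 0

private lemma psd_smul_real {k : ℕ} {A : Matrix (Fin k) (Fin k) ℝ} (hA : A.PosSemidef)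
    {c : ℝ} (hc : 0 ≤ c) : (c • A).PosSemidef := by
  rw [posSemidef_iff_dotProduct_mulVec]
  constructor
  · unfold Matrix.IsHermitian
    rw [conjTranspose_smul, hA.1]; simp
  · intro x
    rw [smul_mulVec, dotProduct_smul]
    exact mul_nonneg hc (hA.dotProduct_mulVec_nonneg x)

private lemma psd_vecMulVec {k : ℕ} (y : Fin k → ℝ) : (vecMulVec y y).PosSemidef := by
  rw [posSemidef_iff_dotProduct_mulVec]
  constructor
  · ext i j; simp [vecMulVec, conjTranspose_apply, mul_comm]
  · intro x
    have h : star x ⬝ᵥ (vecMulVec y y *ᵥ x) = (y ⬝ᵥ x) * (y ⬝ᵥ x) := by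
      simp only [star_trivial, dotProduct, vecMulVec, mulVec, of_apply, Finset.sum_mul,
        Finset.mul_sum]
      exact Finset.sum_congr rfl fun i _ => Finset.sum_congr rfl fun j _ => by ring
    rw [h]; exact mul_self_nonneg _

private lemma sub_lambdaMin_smul_one_posSemidef {k : ℕ} {A : Matrix (Fin k) (Fin k) ℝ}
    (hA : A.IsHermitian) : (A - lambdaMin A • 1).PosSemidef := by
  have hle : ∀ i, lambdaMin A ≤ hA.eigenvalues i := by
    intro i
    rw [lambdaMin, dif_pos hA]
    exact ciInf_le (Set.Finite.bddBelow (Set.finite_range _)) i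
  have hU : (hA.eigenvectorUnitary : Matrix (Fin k) (Fin k) ℝ) *
      (star hA.eigenvectorUnitary : Matrix (Fin k) (Fin k) ℝ) = 1 :=
    mem_unitaryGroup_iff.mp hA.eigenvectorUnitary.2
  have key : A - lambdaMin A • 1 =
      (hA.eigenvectorUnitary : Matrix (Fin k) (Fin k) ℝ) *
        diagonal (fun i => hA.eigenvalues i - lambdaMin A) *
        (star hA.eigenvectorUnitary : Matrix (Fin k) (Fin k) ℝ) := by
    have hdiag : diagonal (fun i => hA.eigenvalues i - lambdaMin A)
        = diagonal (RCLike.ofReal ∘ hA.eigenvalues) - lambdaMin A • (1 : Matrix (Fin k) (Fin k) ℝ) := by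
      ext a b
      rcases eq_or_ne a b with rfl | hab
      · simp
      · simp [diagonal_apply_ne _ hab, Matrix.one_apply_ne hab]
    have hspec : A = (hA.eigenvectorUnitary : Matrix (Fin k) (Fin k) ℝ) *
        diagonal (RCLike.ofReal ∘ hA.eigenvalues) *
        (star hA.eigenvectorUnitary : Matrix (Fin k) (Fin k) ℝ) := hA.spectral_theorem
    rw [hdiag, Matrix.mul_sub, Matrix.sub_mul, ← hspec,
      Matrix.mul_smul, Matrix.mul_one, Matrix.smul_mul, hU]
  rw [key, star_eq_conjTranspose]
  exact (Matrix.PosSemidef.diagonal fun i => sub_nonneg.2 (hle i)).mul_mul_conjTranspose_same _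

private lemma eigenvalue_ge_of_posSemidef {k : ℕ} {A : Matrix (Fin k) (Fin k) ℝ}
    (hA : A.IsHermitian)
    {c : ℝ} (h : (A - c • 1).PosSemidef) (i : Fin k) : c ≤ hA.eigenvalues i := by
  have hnorm : ⇑(hA.eigenvectorBasis i) ⬝ᵥ ⇑(hA.eigenvectorBasis i) = 1 := by
    have h1 := orthonormal_iff_ite.mp hA.eigenvectorBasis.orthonormal i i
    rw [if_pos rfl] at h1
    rw [← h1, EuclideanSpace.inner_eq_star_dotProduct]
    simp [dotProduct]
  have h2 := h.dotProduct_mulVec_nonneg ⇑(hA.eigenvectorBasis i)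
  rw [Matrix.sub_mulVec, smul_mulVec, one_mulVec, hA.mulVec_eigenvectorBasis,
    star_trivial, dotProduct_sub, dotProduct_smul, dotProduct_smul, smul_eq_mul, smul_eq_mul,
    hnorm] at h2
  linarith

/-- single-step lower bound on the smallest eigenvalue of the SGD update
`S' = (1 - η(w + ρ/n)/2) S + η ((w/2) y yᵀ + (β/(2n)) Ψ)` for the penalized GMM
likelihood. -/
theorem sgd_gmm_lambdaMin_bound {m : ℕ}
    (S Ψ : Matrix (Fin m) (Fin m) ℝ) (hS : S.PosDef) (hΨ : Ψ.PosSemidef)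
    (y : Fin m → ℝ) (w η n ρ β : ℝ)
    (hw : w ∈ Set.Icc (0:ℝ) 1) (hη : η ∈ Set.Ioc (0:ℝ) 1)
    (hn : 0 < n) (hβ : 0 < β) (hρ : 0 < ρ) (hρn : ρ ≤ n) :
    min (lambdaMin S) (β / (n + ρ) * lambdaMin Ψ)
      ≤ lambdaMin ((1 - η * (w + ρ/n) / 2) • S
          + η • ((w/2) • Matrix.vecMulVec y y + (β/(2*n)) • Ψ)) := by
  obtain ⟨hw0, hw1⟩ := hw
  obtain ⟨hη0, hη1⟩ := hη
  rcases Nat.eq_zero_or_pos m with hm | hm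
  · subst hm
    have h0 : ∀ (A : Matrix (Fin 0) (Fin 0) ℝ), lambdaMin A = 0 := by
      intro A
      rw [lambdaMin]
      split
      · exact Real.iInf_of_isEmpty _
      · rfl
    simp [h0]
  · haveI : Nonempty (Fin m) := ⟨⟨0, hm⟩⟩
    set s := lambdaMin S with hs_def
    set p := lambdaMin Ψ with hp_def
    set c := min s (β / (n + ρ) * p) with hc_def
    set a := 1 - η * (w + ρ/n) / 2 with ha_def
    have hρn' : ρ / n ≤ 1 := (div_le_one hn).2 hρn
    have hρn0 : 0 ≤ ρ / n := div_nonneg hρ.le hn.le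
    have ha : 0 ≤ a := by
      have h1 : η * (w + ρ/n) ≤ 2 := by nlinarith
      rw [ha_def]; linarith
    have hs0 : 0 ≤ s := by
      rw [hs_def, lambdaMin, dif_pos hS.1]
      exact le_ciInf fun i => (hS.eigenvalues_pos i).le
    have hp0 : 0 ≤ p := by
      rw [hp_def, lambdaMin, dif_pos hΨ.1]
      exact le_ciInf fun i => hΨ.eigenvalues_nonneg i
    have hnρ : 0 < n + ρ := by linarith
    have hc0 : 0 ≤ c :=
      le_min hs0 (mul_nonneg (div_nonneg hβ.le hnρ.le) hp0)
    have hsc : c ≤ s := min_le_left _ _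
    have hpc : c * (n + ρ) / β ≤ p := by
      have h1 : c ≤ β / (n + ρ) * p := min_le_right _ _
      rw [div_le_iff₀ hβ]
      calc c * (n + ρ) ≤ (β / (n + ρ) * p) * (n + ρ) := by
            exact mul_le_mul_of_nonneg_right h1 hnρ.le
        _ = p * β := by field_simp
    -- the coefficient of the identity in the decomposition
    have hd : c ≤ a * s + (η * (β / (2*n))) * p := by
      have h1 : a * c ≤ a * s := mul_le_mul_of_nonneg_left hsc ha
      have h2 : (η * (β / (2*n))) * (c * (n + ρ) / β) ≤ (η * (β / (2*n))) * p := by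
        apply mul_le_mul_of_nonneg_left hpc
        positivity
      have h3 : a * c + (η * (β / (2*n))) * (c * (n + ρ) / β)
          = c + c * (η * (1 - w) / 2) := by
        rw [ha_def]; field_simp; ring
      have h4 : 0 ≤ η * (1 - w) / 2 := by
        have : 0 ≤ η * (1 - w) := mul_nonneg hη0.le (by linarith)
        linarith
      have h5 : 0 ≤ c * (η * (1 - w) / 2) := mul_nonneg hc0 h4
      calc c ≤ c + c * (η * (1 - w) / 2) := le_add_of_nonneg_right h5
        _ = a * c + η * (β / (2*n)) * (c * (n + ρ) / β) := h3.symm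
        _ ≤ a * s + η * (β / (2*n)) * p := add_le_add h1 h2
    set M := (1 - η * (w + ρ/n) / 2) • S
          + η • ((w/2) • Matrix.vecMulVec y y + (β/(2*n)) • Ψ) with hM_def
    have key : M - c • 1 =
        a • (S - s • 1) + (η * (w/2)) • Matrix.vecMulVec y y
          + (η * (β/(2*n))) • (Ψ - p • 1)
          + (a * s + (η * (β / (2*n))) * p - c) • (1 : Matrix (Fin m) (Fin m) ℝ) := by
      rw [hM_def, ha_def]
      ext i j
      simp only [Matrix.add_apply, Matrix.sub_apply, Matrix.smul_apply, Matrix.one_apply,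
        smul_eq_mul]
      split_ifs <;> ring
    have hPSD : (M - c • 1).PosSemidef := by
      rw [key]
      refine Matrix.PosSemidef.add (Matrix.PosSemidef.add (Matrix.PosSemidef.add ?_ ?_) ?_) ?_
      · exact psd_smul_real (sub_lambdaMin_smul_one_posSemidef hS.1) ha
      · exact psd_smul_real (psd_vecMulVec y) (by positivity)
      · exact psd_smul_real (sub_lambdaMin_smul_one_posSemidef hΨ.1) (by positivity)
      · exact psd_smul_real Matrix.PosSemidef.one (by linarith)
    have hM : M.IsHermitian := by
      have h1 : (M - c • 1).IsHermitian := hPSD.1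
      have h2 : ((c : ℝ) • (1 : Matrix (Fin m) (Fin m) ℝ)).IsHermitian := by
        unfold Matrix.IsHermitian
        rw [conjTranspose_smul, conjTranspose_one]; simp
      simpa using h1.add h2
    rw [show lambdaMin M = ⨅ i, hM.eigenvalues i from dif_pos hM]
    exact le_ciInf fun i => eigenvalue_ge_of_posSemidef hM hPSD i
end

section
/- Let S and Ψ be real symmetric m×m matrices with S positive definite and Ψ positive semidefinite, let y ∈ ℝ^m, and let w ∈ [0,1], η ∈ (0,1], and let n, ρ, β be reals with n > 0, β > 0 and 0 < ρ ≤ n. Define the updated matrix S' = (1 − η(w + ρ/n)/2) S + η ((w/2) y yᵀ + (β/(2n)) Ψ). Then λ_max(S') ≤ max( λ_max(S), (w n ‖y‖² + β λ_max(Ψ)) / (w n + ρ) ). (This is the single-step estimate showing that the largest eigenvalue of the covariance-type iterates of SGD for the penalized GMM likelihood stays bounded above, part of the proof that the SGD iterates remain in a compact set.) -/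
open scoped Classical
open Matrix

lemma inner_eq_dot {m : ℕ} (u v : EuclideanSpace ℝ (Fin m)) :
    (inner ℝ u v : ℝ) = (u : Fin m → ℝ) ⬝ᵥ (v : Fin m → ℝ) := by
  simp [PiLp.inner_apply, dotProduct, RCLike.inner_apply, mul_comm]

lemma quad_le {m : ℕ} {A : Matrix (Fin m) (Fin m) ℝ} (hA : A.IsHermitian)
    (x : EuclideanSpace ℝ (Fin m)) :
    (x : Fin m → ℝ) ⬝ᵥ (A *ᵥ x) ≤ lambdaMax A * ((x : Fin m → ℝ) ⬝ᵥ x) := by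
  classical
  set b := hA.eigenvectorBasis with hb
  have hAx : (x : Fin m → ℝ) ⬝ᵥ (A *ᵥ x)
      = ∑ i, hA.eigenvalues i * ((inner ℝ x (b i) : ℝ) * (inner ℝ x (b i) : ℝ)) := by
    have h1 := b.sum_inner_mul_inner x ((WithLp.equiv 2 _).symm (A *ᵥ x))
    rw [inner_eq_dot] at h1
    have h1' : (x : Fin m → ℝ) ⬝ᵥ (A *ᵥ x)
        = ∑ i, (inner ℝ x (b i) : ℝ) * (inner ℝ (b i) ((WithLp.equiv 2 _).symm (A *ᵥ (x : Fin m → ℝ))) : ℝ) :=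
      h1.symm
    rw [h1']
    congr 1; ext i
    have h2 : (inner ℝ (b i) ((WithLp.equiv 2 _).symm (A *ᵥ (x : Fin m → ℝ))) : ℝ)
        = hA.eigenvalues i * (inner ℝ (b i) x : ℝ) := by
      rw [inner_eq_dot, inner_eq_dot]
      have hAT : Aᵀ = A := by
        simpa [Matrix.conjTranspose_eq_transpose_of_trivial] using hA.eq
      have hsym : (b i : Fin m → ℝ) ⬝ᵥ (A *ᵥ x) = (A *ᵥ (b i : Fin m → ℝ)) ⬝ᵥ (x : Fin m → ℝ) := by
        rw [Matrix.dotProduct_mulVec, ← Matrix.mulVec_transpose, hAT]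
      show (b i : Fin m → ℝ) ⬝ᵥ (A *ᵥ (x : Fin m → ℝ)) = _
      have hev : A *ᵥ (b i : Fin m → ℝ) = hA.eigenvalues i • (b i : Fin m → ℝ) :=
        hA.mulVec_eigenvectorBasis i
      rw [hsym, hev, smul_dotProduct]
      rfl
    rw [h2, real_inner_comm (b i) x]
    ring
  rw [hAx]
  have hxx : (x : Fin m → ℝ) ⬝ᵥ x = ∑ i, (inner ℝ x (b i) : ℝ) * (inner ℝ x (b i) : ℝ) := by
    have := b.sum_inner_mul_inner x x
    rw [inner_eq_dot] at this
    rw [← this]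
    congr 1; ext i; rw [real_inner_comm (b i) x]
  rw [hxx, Finset.mul_sum]
  apply Finset.sum_le_sum
  intro i _
  have hle : hA.eigenvalues i ≤ lambdaMax A := by
    rw [lambdaMax, dif_pos hA]
    exact le_ciSup (Set.finite_range _).bddAbove i
  nlinarith [mul_self_nonneg (inner ℝ x (b i) : ℝ)]

lemma quad_le' {m : ℕ} {A : Matrix (Fin m) (Fin m) ℝ} (hA : A.IsHermitian)
    (x : Fin m → ℝ) : x ⬝ᵥ (A *ᵥ x) ≤ lambdaMax A * (x ⬝ᵥ x) :=
  quad_le hA ((WithLp.equiv 2 _).symm x)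

lemma dot_vecMulVec {m : ℕ} (y x : Fin m → ℝ) :
    x ⬝ᵥ (vecMulVec y y *ᵥ x) = (y ⬝ᵥ x) * (y ⬝ᵥ x) := by
  simp [dotProduct, mulVec, vecMulVec, Finset.mul_sum, Finset.sum_mul]
  rw [Finset.sum_comm]
  congr 1; ext i; congr 1; ext j; ring

lemma dot_sq_le {m : ℕ} (u v : Fin m → ℝ) :
    (u ⬝ᵥ v) * (u ⬝ᵥ v) ≤ (u ⬝ᵥ u) * (v ⬝ᵥ v) := by
  have := real_inner_mul_inner_self_le (F := EuclideanSpace ℝ (Fin m))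
    ((WithLp.equiv 2 _).symm u) ((WithLp.equiv 2 _).symm v)
  simp only [inner_eq_dot] at this
  simpa [PiLp.inner_apply, dotProduct, RCLike.inner_apply, mul_comm] using this

lemma lambdaMax_zero (A : Matrix (Fin 0) (Fin 0) ℝ) : lambdaMax A = 0 := by
  have hA : A.IsHermitian := Subsingleton.elim _ _
  rw [lambdaMax, dif_pos hA, Real.iSup_of_isEmpty]


/-- single-step upper bound on the largest eigenvalue of the SGD update
`S' = (1 - η(w + ρ/n)/2) S + η ((w/2) y yᵀ + (β/(2n)) Ψ)` for the penalized GMM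
likelihood; `y ⬝ᵥ y = ‖y‖²` is the squared Euclidean norm. -/
theorem sgd_gmm_lambdaMax_bound {m : ℕ}
    (S Ψ : Matrix (Fin m) (Fin m) ℝ) (hS : S.PosDef) (hΨ : Ψ.PosSemidef)
    (y : Fin m → ℝ) (w η n ρ β : ℝ)
    (hw : w ∈ Set.Icc (0:ℝ) 1) (hη : η ∈ Set.Ioc (0:ℝ) 1)
    (hn : 0 < n) (hβ : 0 < β) (hρ : 0 < ρ) (hρn : ρ ≤ n) :
    lambdaMax ((1 - η * (w + ρ/n) / 2) • S
        + η • ((w/2) • Matrix.vecMulVec y y + (β/(2*n)) • Ψ))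
      ≤ max (lambdaMax S) ((w * n * (y ⬝ᵥ y) + β * lambdaMax Ψ) / (w * n + ρ)) := by
  classical
  obtain ⟨hw0, hw1⟩ := hw
  obtain ⟨hη0, hη1⟩ := hη
  rcases Nat.eq_zero_or_pos m with hm | hm
  · subst hm
    rw [lambdaMax_zero, lambdaMax_zero]
    exact le_trans (le_refl 0) (le_max_left _ _)
  have : NeZero m := ⟨hm.ne'⟩
  set A := (1 - η * (w + ρ/n) / 2) • S
      + η • ((w/2) • Matrix.vecMulVec y y + (β/(2*n)) • Ψ) with hAdef
  have hvv : (Matrix.vecMulVec y y).IsHermitian := by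
    show (Matrix.vecMulVec y y)ᴴ = _
    ext i j
    simp [Matrix.vecMulVec, mul_comm]
  have hH : A.IsHermitian := by
    show Aᴴ = A
    rw [hAdef]
    have hSt : Sᵀ = S := by
      simpa [Matrix.conjTranspose_eq_transpose_of_trivial] using hS.1.eq
    have hΨt : Ψᵀ = Ψ := by
      simpa [Matrix.conjTranspose_eq_transpose_of_trivial] using hΨ.1.eq
    have hvt : (Matrix.vecMulVec y y)ᵀ = Matrix.vecMulVec y y := by
      simpa [Matrix.conjTranspose_eq_transpose_of_trivial] using hvv.eq
    simp [Matrix.conjTranspose_add, Matrix.conjTranspose_smul, hSt, hΨt, hvt]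
  -- pick maximizing eigenvalue index
  obtain ⟨i₀, hi₀⟩ := Finite.exists_max hH.eigenvalues
  have hlm : lambdaMax A = hH.eigenvalues i₀ := by
    rw [lambdaMax, dif_pos hH]
    exact le_antisymm (ciSup_le hi₀) (le_ciSup (Set.finite_range _).bddAbove i₀)
  set v : Fin m → ℝ := (hH.eigenvectorBasis i₀ : Fin m → ℝ) with hv
  have hval : hH.eigenvalues i₀ = v ⬝ᵥ (A *ᵥ v) := by
    have := hH.eigenvalues_eq i₀
    simpa using this
  have hvv1 : v ⬝ᵥ v = 1 := by
    have h1 := hH.eigenvectorBasis.orthonormal.1 i₀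
    have : (inner ℝ (hH.eigenvectorBasis i₀) (hH.eigenvectorBasis i₀) : ℝ) = 1 := by
      rw [real_inner_self_eq_norm_sq, h1]; norm_num
    rw [← this, inner_eq_dot]
  -- expand quadratic form
  have hexp : v ⬝ᵥ (A *ᵥ v)
      = (1 - η * (w + ρ/n) / 2) * (v ⬝ᵥ (S *ᵥ v))
        + η * (w/2) * ((y ⬝ᵥ v) * (y ⬝ᵥ v)) + η * (β/(2*n)) * (v ⬝ᵥ (Ψ *ᵥ v)) := by
    rw [hAdef]
    simp only [Matrix.add_mulVec, Matrix.smul_mulVec, dotProduct_add,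
      dotProduct_smul, smul_eq_mul, dot_vecMulVec]
    ring
  -- bounds
  have hqS : v ⬝ᵥ (S *ᵥ v) ≤ lambdaMax S := by
    have := quad_le' hS.1 v
    rwa [hvv1, mul_one] at this
  have hqΨ : v ⬝ᵥ (Ψ *ᵥ v) ≤ lambdaMax Ψ := by
    have := quad_le' hΨ.1 v
    rwa [hvv1, mul_one] at this
  have hqy : (y ⬝ᵥ v) * (y ⬝ᵥ v) ≤ y ⬝ᵥ y := by
    have := dot_sq_le y v
    rwa [hvv1, mul_one] at this
  set c₀ := η * (w + ρ/n) / 2 with hc₀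
  set B := (w * n * (y ⬝ᵥ y) + β * lambdaMax Ψ) / (w * n + ρ) with hB
  set M := max (lambdaMax S) B with hM
  have hρn' : ρ / n ≤ 1 := (div_le_one hn).2 hρn
  have hc0 : 0 ≤ c₀ := by
    apply div_nonneg _ (by norm_num)
    exact mul_nonneg hη0.le (by positivity)
  have hc1 : c₀ ≤ 1 := by
    rw [hc₀, div_le_one (by norm_num)]
    nlinarith
  have hwnρ : 0 < w * n + ρ := by nlinarith
  have hkey : η * (w/2) * (y ⬝ᵥ y) + η * (β/(2*n)) * (lambdaMax Ψ) = c₀ * B := by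
    rw [hc₀, hB]
    field_simp
  have hSM : lambdaMax S ≤ M := le_max_left _ _
  have hBM : B ≤ M := le_max_right _ _
  rw [hlm, hval, hexp]
  have h1 : (1 - c₀) * (v ⬝ᵥ (S *ᵥ v)) ≤ (1 - c₀) * M :=
    mul_le_mul_of_nonneg_left (le_trans hqS hSM) (by linarith)
  have h2 : η * (w/2) * ((y ⬝ᵥ v) * (y ⬝ᵥ v)) + η * (β/(2*n)) * (v ⬝ᵥ (Ψ *ᵥ v))
      ≤ c₀ * B := by
    rw [← hkey]
    have := mul_le_mul_of_nonneg_left hqy (show (0:ℝ) ≤ η * (w/2) by positivity)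
    have := mul_le_mul_of_nonneg_left hqΨ (show (0:ℝ) ≤ η * (β/(2*n)) by positivity)
    linarith
  have h3 : c₀ * B ≤ c₀ * M := mul_le_mul_of_nonneg_left hBM hc0
  calc (1 - c₀) * (v ⬝ᵥ (S *ᵥ v)) + η * (w/2) * ((y ⬝ᵥ v) * (y ⬝ᵥ v))
        + η * (β/(2*n)) * (v ⬝ᵥ (Ψ *ᵥ v))
      ≤ (1 - c₀) * M + c₀ * M := by linarith
    _ = M := by ring
end

section
/- Let U ∈ ℝ^{d×d} be symmetric positive definite, t ∈ ℝ^d and s > 0. Then the reformulated log-likelihood evaluated at the block matrix S(U,t,s) equals L̂(S(U,t,s)) = n/2 − (nd/2) log(2π) − (n/2) log s − (n/2) log det U − ½ Σ_{i=1}^n (xᵢ − t)ᵀ U^{−1} (xᵢ − t) − n/(2s). -/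
open Matrix Real

section blk
variable {d : ℕ} (U : Matrix (Fin d) (Fin d) ℝ) (t : Fin d → ℝ) (s : ℝ)

noncomputable def Ablk : Matrix (Fin d) (Fin d) ℝ := Matrix.of fun i j => U i j + s * t i * t j
noncomputable def Bblk : Matrix (Fin d) (Fin 1) ℝ := Matrix.of fun i _ => s * t i
noncomputable def Cblk : Matrix (Fin 1) (Fin d) ℝ := Matrix.of fun _ j => s * t j
noncomputable def Dblk : Matrix (Fin 1) (Fin 1) ℝ := Matrix.of fun _ _ => s

lemma Sblk_eq : Sblk U t s =
    (Matrix.fromBlocks (Ablk U t s) (Bblk t s) (Cblk t s) (Dblk s)).submatrix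
      finSumFinEquiv.symm finSumFinEquiv.symm := by
  have h : (Sblk U t s).submatrix (finSumFinEquiv (m := d) (n := 1))
      (finSumFinEquiv (m := d) (n := 1)) =
      Matrix.fromBlocks (Ablk U t s) (Bblk t s) (Cblk t s) (Dblk s) := by
    ext i j
    rcases i with i | i <;> rcases j with j | j <;>
      simp [Sblk, Ablk, Bblk, Cblk, Dblk, Fin.snoc, Fin.eq_zero]
  rw [← h, Matrix.submatrix_submatrix]
  simp
end blk

section main
variable {d : ℕ} (U : Matrix (Fin d) (Fin d) ℝ) (t : Fin d → ℝ) (s : ℝ)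
lemma det_Sblk (hs : 0 < s) : (Sblk U t s).det = s * U.det := by
  haveI : Invertible (Dblk s) := by
    apply Matrix.invertibleOfIsUnitDet
    rw [Matrix.det_fin_one]
    exact (isUnit_iff_ne_zero).2 hs.ne'
  have hDinv : ⅟(Dblk s) = Matrix.of fun _ _ => s⁻¹ := by
    rw [Matrix.invOf_eq_nonsing_inv]
    apply Matrix.inv_eq_right_inv
    ext i j
    simp [Dblk, Matrix.mul_apply, Fin.sum_univ_one, mul_inv_cancel₀ hs.ne',
      Matrix.one_apply, Fin.subsingleton_one.elim i j]
  rw [Sblk_eq, Matrix.det_submatrix_equiv_self, Matrix.det_fromBlocks₂₂, hDinv]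
  have : Ablk U t s - Bblk t s * (Matrix.of (fun _ _ => s⁻¹) : Matrix (Fin 1) (Fin 1) ℝ) * Cblk t s = U := by
    ext i j
    simp [Ablk, Bblk, Cblk, Matrix.mul_apply, Fin.sum_univ_one]
    field_simp
    ring
  rw [this, Matrix.det_fin_one]
  rfl
end main

section inv
variable {d : ℕ} (U : Matrix (Fin d) (Fin d) ℝ) (t : Fin d → ℝ) (s : ℝ)

noncomputable def Nblk : Matrix (Fin d ⊕ Fin 1) (Fin d ⊕ Fin 1) ℝ :=
  Matrix.fromBlocks U⁻¹ (Matrix.of fun i _ => -(U⁻¹ *ᵥ t) i)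
    (Matrix.of fun _ j => -(U⁻¹ *ᵥ t) j)
    (Matrix.of fun _ _ => s⁻¹ + t ⬝ᵥ (U⁻¹ *ᵥ t))

lemma inv_Sblk (hU : U.PosDef) (hs : 0 < s) :
    (Sblk U t s)⁻¹ = (Nblk U t s).submatrix finSumFinEquiv.symm finSumFinEquiv.symm := by
  have hdet : IsUnit U.det := isUnit_iff_ne_zero.2 hU.det_pos.ne'
  have hUU : U * U⁻¹ = 1 := Matrix.mul_nonsing_inv U hdet
  have hsym : U⁻¹ᵀ = U⁻¹ := by
    rw [Matrix.transpose_nonsing_inv]; congr 1; exact hU.isHermitian.eq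
  have hentry : ∀ a b, U⁻¹ a b = U⁻¹ b a := by
    intro a b
    conv_lhs => rw [← hsym]
    exact Matrix.transpose_apply _ a b
  have hv : ∀ j, ∑ k, t k * U⁻¹ k j = (U⁻¹ *ᵥ t) j := by
    intro j
    simp only [Matrix.mulVec, dotProduct]
    refine Finset.sum_congr rfl fun k _ => ?_
    rw [mul_comm, hentry j k]
  have hUv : U *ᵥ (U⁻¹ *ᵥ t) = t := by
    rw [Matrix.mulVec_mulVec, hUU, Matrix.one_mulVec]
  apply Matrix.inv_eq_right_inv
  rw [Sblk_eq, Nblk, Matrix.submatrix_mul_equiv, Matrix.fromBlocks_multiply]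
  set v : Fin d → ℝ := U⁻¹ *ᵥ t with hvdef
  have hTL : Ablk U t s * U⁻¹ + Bblk t s * (Matrix.of (fun _ j => -v j) : Matrix (Fin 1) (Fin d) ℝ) = 1 := by
    ext i j
    simp only [Matrix.add_apply, Matrix.mul_apply, Ablk, Bblk, Matrix.of_apply,
      Fin.sum_univ_one, add_mul, Finset.sum_add_distrib]
    have h1 : ∑ k, s * t i * t k * U⁻¹ k j = s * t i * v j := by
      rw [← hv j, Finset.mul_sum]
      exact Finset.sum_congr rfl fun k _ => by ring
    have h2 : ∑ k, U i k * U⁻¹ k j = (1 : Matrix (Fin d) (Fin d) ℝ) i j := by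
      rw [← hUU]; rfl
    rw [h1, h2]; ring
  have hTR : Ablk U t s * (Matrix.of (fun i _ => -v i) : Matrix (Fin d) (Fin 1) ℝ)
      + Bblk t s * (Matrix.of (fun _ _ => s⁻¹ + t ⬝ᵥ v) : Matrix (Fin 1) (Fin 1) ℝ) = 0 := by
    ext i j
    simp only [Matrix.add_apply, Matrix.mul_apply, Ablk, Bblk, Matrix.of_apply,
      Fin.sum_univ_one, Matrix.zero_apply]
    have h1 : ∑ k, (U i k + s * t i * t k) * -(v k)
        = -(U *ᵥ v) i - s * t i * (t ⬝ᵥ v) := by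
      simp only [Matrix.mulVec, dotProduct, Finset.mul_sum, ← Finset.sum_neg_distrib,
        ← Finset.sum_sub_distrib]
      exact Finset.sum_congr rfl fun k _ => by ring
    rw [h1, hUv]
    linear_combination t i * mul_inv_cancel₀ hs.ne'
  have hBL : Cblk t s * U⁻¹ + Dblk s * (Matrix.of (fun _ j => -v j) : Matrix (Fin 1) (Fin d) ℝ) = 0 := by
    ext i j
    simp only [Matrix.add_apply, Matrix.mul_apply, Cblk, Dblk, Matrix.of_apply,
      Fin.sum_univ_one, Matrix.zero_apply]
    have h1 : ∑ k, s * t k * U⁻¹ k j = s * v j := by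
      rw [← hv j, Finset.mul_sum]
      exact Finset.sum_congr rfl fun k _ => by ring
    rw [h1]; ring
  have hBR : Cblk t s * (Matrix.of (fun i _ => -v i) : Matrix (Fin d) (Fin 1) ℝ)
      + Dblk s * (Matrix.of (fun _ _ => s⁻¹ + t ⬝ᵥ v) : Matrix (Fin 1) (Fin 1) ℝ) = 1 := by
    ext i j
    obtain rfl : i = j := Subsingleton.elim i j
    simp only [Matrix.add_apply, Matrix.mul_apply, Cblk, Dblk, Matrix.of_apply,
      Fin.sum_univ_one, Matrix.one_apply_eq]
    have h1 : ∑ k, s * t k * -(v k) = -(s * (t ⬝ᵥ v)) := by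
      simp only [dotProduct, Finset.mul_sum, ← Finset.sum_neg_distrib]
      exact Finset.sum_congr rfl fun k _ => by ring
    rw [h1]
    linear_combination mul_inv_cancel₀ hs.ne'
  rw [hTL, hTR, hBL, hBR, Matrix.fromBlocks_one, Matrix.submatrix_one_equiv]
end inv

lemma dot_submatrix {α β : Type*} [Fintype α] [Fintype β] [DecidableEq α] [DecidableEq β]
    (e : α ≃ β) (y : β → ℝ) (P : Matrix α α ℝ) :
    y ⬝ᵥ ((P.submatrix e.symm e.symm) *ᵥ y) = (y ∘ e) ⬝ᵥ (P *ᵥ (y ∘ e)) := by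
  rw [Matrix.submatrix_mulVec_equiv]
  simp only [dotProduct, Equiv.symm_symm]
  refine Fintype.sum_equiv e.symm _ _ fun i => ?_
  simp

section quad
variable {d : ℕ} (U : Matrix (Fin d) (Fin d) ℝ) (t : Fin d → ℝ) (s : ℝ)

lemma quad_Sblk (hU : U.PosDef) (hs : 0 < s) (w : Fin d → ℝ) :
    liftPt w ⬝ᵥ ((Sblk U t s)⁻¹ *ᵥ liftPt w)
      = (w - t) ⬝ᵥ (U⁻¹ *ᵥ (w - t)) + s⁻¹ := by
  have hdet : IsUnit U.det := isUnit_iff_ne_zero.2 hU.det_pos.ne'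
  have hsym : U⁻¹ᵀ = U⁻¹ := by
    rw [Matrix.transpose_nonsing_inv]; congr 1; exact hU.isHermitian.eq
  have hentry : ∀ a b, U⁻¹ a b = U⁻¹ b a := by
    intro a b
    conv_lhs => rw [← hsym]
    exact Matrix.transpose_apply _ a b
  rw [inv_Sblk U t s hU hs, dot_submatrix finSumFinEquiv (liftPt w) (Nblk U t s)]
  have hw : liftPt w ∘ ⇑(finSumFinEquiv (m := d) (n := 1))
      = Sum.elim w (fun _ => (1:ℝ)) := by
    funext p
    rcases p with p | p
    · simp [liftPt, Fin.snoc]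
    · obtain rfl : p = 0 := Subsingleton.elim p 0
      simp [liftPt, Fin.snoc]
  rw [hw, Nblk, Matrix.fromBlocks_mulVec, sumElim_dotProduct_sumElim]
  simp only [Sum.elim_comp_inl, Sum.elim_comp_inr]
  have hB : (Matrix.of fun i (_ : Fin 1) => -(U⁻¹ *ᵥ t) i) *ᵥ (fun _ => (1:ℝ))
      = fun i => -(U⁻¹ *ᵥ t) i := by
    funext i; simp [Matrix.mulVec, dotProduct, Fin.sum_univ_one]
  have hC : (Matrix.of fun (_ : Fin 1) j => -(U⁻¹ *ᵥ t) j) *ᵥ w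
      = fun _ => -((U⁻¹ *ᵥ t) ⬝ᵥ w) := by
    funext i
    simp only [Matrix.mulVec, dotProduct, Matrix.of_apply]
    rw [← Finset.sum_neg_distrib]
    exact Finset.sum_congr rfl fun k _ => by ring
  have hD : (Matrix.of fun (_ _ : Fin 1) => s⁻¹ + t ⬝ᵥ (U⁻¹ *ᵥ t)) *ᵥ (fun _ => (1:ℝ))
      = fun _ => s⁻¹ + t ⬝ᵥ (U⁻¹ *ᵥ t) := by
    funext i; simp [Matrix.mulVec, dotProduct, Fin.sum_univ_one]
  rw [hB, hC, hD]
  have htU : t ⬝ᵥ (U⁻¹ *ᵥ w) = (U⁻¹ *ᵥ t) ⬝ᵥ w := by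
    simp only [dotProduct, Matrix.mulVec, dotProduct, Finset.mul_sum, Finset.sum_mul]
    rw [Finset.sum_comm]
    refine Finset.sum_congr rfl fun k _ => Finset.sum_congr rfl fun j _ => ?_
    rw [hentry j k]; ring
  have expand : (w - t) ⬝ᵥ (U⁻¹ *ᵥ (w - t))
      = w ⬝ᵥ (U⁻¹ *ᵥ w) - w ⬝ᵥ (U⁻¹ *ᵥ t) - t ⬝ᵥ (U⁻¹ *ᵥ w) + t ⬝ᵥ (U⁻¹ *ᵥ t) := by
    rw [Matrix.mulVec_sub, sub_dotProduct, dotProduct_sub, dotProduct_sub]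
    ring
  rw [expand, htU]
  simp only [dotProduct_add, dotProduct, Fin.sum_univ_one, Pi.add_apply, mul_add,
    Finset.sum_add_distrib]
  have h1 : ∑ i, w i * (-(U⁻¹ *ᵥ t) i) = -(∑ i, w i * (U⁻¹ *ᵥ t) i) := by
    rw [← Finset.sum_neg_distrib]
    exact Finset.sum_congr rfl fun k _ => by ring
  rw [h1]
  ring
end quad

/-- the reformulated log-likelihood evaluated at the block matrix
`S(U,t,s)` in closed form. -/
theorem Lhat_at_Sblk {d n : ℕ} (hd : 1 ≤ d) (x : Fin n → Fin d → ℝ)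
    (U : Matrix (Fin d) (Fin d) ℝ) (hU : U.PosDef)
    (t : Fin d → ℝ) (s : ℝ) (hs : 0 < s) :
    Lhat x (Sblk U t s)
      = n/2 - n * d / 2 * Real.log (2 * Real.pi) - n/2 * Real.log s
        - n/2 * Real.log U.det
        - 1/2 * ∑ i, (x i - t) ⬝ᵥ (U⁻¹ *ᵥ (x i - t)) - n/(2*s) := by
  have h2pi : (0:ℝ) < 2 * Real.pi := by positivity
  have hdetU : 0 < U.det := hU.det_pos
  have hdetS : (Sblk U t s).det = s * U.det := det_Sblk U t s hs
  set C : ℝ := 1/2 * (Real.log (2 * Real.pi) + 1)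
      - 1/2 * (Real.log s + Real.log U.det)
      - ((d:ℝ)+1)/2 * Real.log (2 * Real.pi) - 1/2 * s⁻¹ with hC
  have hterm : ∀ i, Real.log (qN (liftPt (x i)) (Sblk U t s))
      = C - 1/2 * ((x i - t) ⬝ᵥ (U⁻¹ *ᵥ (x i - t))) := by
    intro i
    rw [qN, quad_Sblk U t s hU hs (x i), hdetS]
    have h1 : (0:ℝ) < 2 * Real.pi * Real.exp 1 := by positivity
    have h2 : (0:ℝ) < s * U.det := by positivity
    rw [Real.log_mul (by positivity) (Real.exp_ne_zero _),
      Real.log_mul (by positivity) (by positivity),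
      Real.log_mul (by positivity) (by positivity),
      Real.log_rpow h1, Real.log_rpow h2, Real.log_rpow h2pi,
      Real.log_exp, Real.log_mul h2pi.ne' (Real.exp_ne_zero 1), Real.log_exp,
      Real.log_mul hs.ne' hdetU.ne']
    rw [hC]; ring
  rw [Lhat]
  rw [Finset.sum_congr rfl fun i _ => hterm i]
  rw [Finset.sum_sub_distrib, Finset.sum_const, Finset.card_univ, Fintype.card_fin,
    ← Finset.mul_sum, nsmul_eq_mul, hC]
  have hsne : s ≠ 0 := hs.ne'
  field_simp
  ring
end
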